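/- arXiv:1203.6608 — 3 statements merged into one kernel-verified Lean document; each statement's English description precedes it below -/
import Mathlib

section
/- If u and v are transmission solutions at the same spectral parameter λ ∈ ℂ, then the modified Wronskian x ↦ w(x)(u(x)v'(x) − u'(x)v(x)) is constant on [0,d₁) ∪ (d₁,d₂) ∪ ⋯ ∪ (d_{m−1},π], i.e. it takes the same value at every point of [0,π] other than the transmission points d₁,…,d_{m−1}. -/
open MeasureTheory Set Filter Topology Finset
open scoped Real BigOperators ComplexConjugate

noncomputable section

/-- The piecewise-constant weight function: `w = 1` on `(0, d 1)` and
`w = (a 1 * b 1 * ⋯ * a j * b j)⁻¹` on `(d j, d (j+1))`. -/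
def wfun (m : ℕ) (d a b : ℕ → ℝ) (x : ℝ) : ℝ :=
  ∏ i ∈ Finset.Icc 1 (m - 1), (if d i < x then (a i * b i)⁻¹ else 1)

/-- `y`, with derivative `y'`, is a transmission solution of `-y'' + q y = λ y` on `[0, π]`
for the transmission data `(a i, b i, c i)` at the interior points `d i`, `1 ≤ i ≤ m - 1`:
on each subinterval `(d j, d (j+1))` the function `y` is differentiable with derivative `y'`,
`y'` is absolutely continuous with a.e. derivative `(q - λ) y` (expressed in integrated form),
`y` and `y'` are right-continuous at each `d j`, `j < m`, left-continuous at `d m = π`, and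
the one-sided limits at the interior points satisfy the transmission conditions. -/
def IsTransSol (m : ℕ) (d a b c : ℕ → ℝ) (q : ℝ → ℝ) (lam : ℂ) (y y' : ℝ → ℂ) : Prop :=
  (∀ j < m, ∀ x ∈ Set.Ioo (d j) (d (j + 1)), HasDerivAt y (y' x) x) ∧
  (∀ j < m, ∀ s ∈ Set.Ioo (d j) (d (j + 1)), ∀ t ∈ Set.Ioo (d j) (d (j + 1)),
      y' t - y' s = ∫ x in s..t, ((q x : ℂ) - lam) * y x) ∧
  (∀ j < m, ContinuousWithinAt y (Set.Ici (d j)) (d j) ∧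
      ContinuousWithinAt y' (Set.Ici (d j)) (d j)) ∧
  (ContinuousWithinAt y (Set.Iic (d m)) (d m) ∧ ContinuousWithinAt y' (Set.Iic (d m)) (d m)) ∧
  (∀ i, 1 ≤ i → i < m → ∃ yl yl' : ℂ,
      Filter.Tendsto y (nhdsWithin (d i) (Set.Iio (d i))) (nhds yl) ∧
      Filter.Tendsto y' (nhdsWithin (d i) (Set.Iio (d i))) (nhds yl') ∧
      y (d i) = (a i : ℂ) * yl ∧ y' (d i) = (b i : ℂ) * yl' + (c i : ℂ) * yl)


section AuxLemmas
open intervalIntegral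

lemma swap_triangle {s t : ℝ} (hst : s ≤ t) {p g : ℝ → ℂ}
    (hp : Continuous p) (hg : MeasureTheory.IntegrableOn g (Set.Ioc s t)) :
    ∫ y in s..t, p y * (∫ x in s..y, g x) = ∫ x in s..t, (∫ y in x..t, p y) * g x := by
  set μ := volume.restrict (Set.Ioc s t) with hμ
  have hpμ : Integrable p μ := hp.integrableOn_Ioc
  have hprod : Integrable (fun z : ℝ × ℝ => p z.1 * g z.2) (μ.prod μ) := hpμ.mul_prod hg
  have hset : MeasurableSet {z : ℝ × ℝ | z.2 ≤ z.1} :=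
    measurableSet_le measurable_snd measurable_fst
  have hF : Integrable ({z : ℝ × ℝ | z.2 ≤ z.1}.indicator (fun z => p z.1 * g z.2)) (μ.prod μ) :=
    hprod.indicator hset
  have swap := MeasureTheory.integral_integral_swap
    (f := fun y x => ({z : ℝ × ℝ | z.2 ≤ z.1}.indicator (fun z => p z.1 * g z.2)) (y, x)) hF
  have hleft : (∫ y, (∫ x, ({z : ℝ × ℝ | z.2 ≤ z.1}.indicator
      (fun z => p z.1 * g z.2)) (y, x) ∂μ) ∂μ)
      = ∫ y in s..t, p y * (∫ x in s..y, g x) := by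
    rw [intervalIntegral.integral_of_le hst]
    refine MeasureTheory.setIntegral_congr_fun measurableSet_Ioc (fun y hy => ?_)
    have h1 : (fun x => ({z : ℝ × ℝ | z.2 ≤ z.1}.indicator (fun z => p z.1 * g z.2)) (y, x))
        = (Set.Iic y).indicator (fun x => p y * g x) := by
      funext x
      by_cases hxy : x ≤ y <;> simp [Set.indicator_apply, hxy]
    rw [h1, MeasureTheory.integral_indicator measurableSet_Iic, hμ,
      Measure.restrict_restrict measurableSet_Iic]
    have h2 : Set.Iic y ∩ Set.Ioc s t = Set.Ioc s y := by
      ext z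
      simp only [Set.mem_inter_iff, Set.mem_Iic, Set.mem_Ioc]
      exact ⟨fun h => ⟨h.2.1, h.1⟩, fun h => ⟨h.2, h.1, h.2.trans hy.2⟩⟩
    rw [h2, intervalIntegral.integral_of_le hy.1.le]
    simp_rw [← smul_eq_mul, MeasureTheory.integral_smul]
  have hright : (∫ x, (∫ y, ({z : ℝ × ℝ | z.2 ≤ z.1}.indicator
      (fun z => p z.1 * g z.2)) (y, x) ∂μ) ∂μ)
      = ∫ x in s..t, (∫ y in x..t, p y) * g x := by
    rw [intervalIntegral.integral_of_le hst]
    refine MeasureTheory.setIntegral_congr_fun measurableSet_Ioc (fun x hx => ?_)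
    have h1 : (fun y => ({z : ℝ × ℝ | z.2 ≤ z.1}.indicator (fun z => p z.1 * g z.2)) (y, x))
        = (Set.Ici x).indicator (fun y => p y * g x) := by
      funext y
      by_cases hxy : x ≤ y <;> simp [Set.indicator_apply, hxy]
    rw [h1, MeasureTheory.integral_indicator measurableSet_Ici, hμ,
      Measure.restrict_restrict measurableSet_Ici]
    have h2 : Set.Ici x ∩ Set.Ioc s t = Set.Icc x t := by
      ext z
      simp only [Set.mem_inter_iff, Set.mem_Ici, Set.mem_Ioc, Set.mem_Icc]
      exact ⟨fun h => ⟨h.1, h.2.2⟩, fun h => ⟨h.1, lt_of_lt_of_le hx.1 h.1, h.2⟩⟩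
    rw [h2]
    simp_rw [← smul_eq_mul (a := p _), _root_.integral_smul_const]
    rw [MeasureTheory.integral_Icc_eq_integral_Ioc, ← intervalIntegral.integral_of_le hx.2]
    simp [smul_eq_mul]
  rw [← hleft, ← hright, swap]

lemma key_mul {s t : ℝ} (hst : s ≤ t) {w p g : ℝ → ℂ}
    (hw : ∀ x ∈ Set.Icc s t, HasDerivAt w (p x) x)
    (hpc : ContinuousOn p (Set.Icc s t))
    (hg : MeasureTheory.IntegrableOn g (Set.Ioc s t)) :
    w t * ∫ x in s..t, g x
      = (∫ x in s..t, w x * g x) + ∫ y in s..t, p y * (∫ x in s..y, g x) := by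
  set cl : ℝ → ℝ := fun y => max s (min y t) with hcl
  have hclcont : Continuous cl := continuous_const.max (continuous_id.min continuous_const)
  have hclmem : ∀ y, cl y ∈ Set.Icc s t := fun y =>
    ⟨le_max_left _ _, max_le hst (min_le_right _ _)⟩
  have hcleq : ∀ y ∈ Set.Icc s t, cl y = y := by
    intro y hy
    simp only [hcl]
    rw [min_eq_left hy.2, max_eq_right hy.1]
  have hwc : ContinuousOn w (Set.Icc s t) := fun x hx =>
    (hw x hx).continuousAt.continuousWithinAt
  set pext : ℝ → ℂ := p ∘ cl with hpext
  set wext : ℝ → ℂ := w ∘ cl with hwext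
  have hpextc : Continuous pext := hpc.comp_continuous hclcont hclmem
  have hwextc : Continuous wext := hwc.comp_continuous hclcont hclmem
  obtain ⟨C, hC⟩ := isCompact_Icc.exists_bound_of_continuousOn hwc
  have hwbd : ∀ x, ‖wext x‖ ≤ C := fun x => hC _ (hclmem x)
  have hwg : MeasureTheory.IntegrableOn (fun x => wext x * g x) (Set.Ioc s t) :=
    hg.bdd_mul hwextc.aestronglyMeasurable (Filter.Eventually.of_forall hwbd)
  have hIwg : IntervalIntegrable (fun x => wext x * g x) volume s t :=
    (intervalIntegrable_iff_integrableOn_Ioc_of_le hst).2 hwg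
  have hIg : IntervalIntegrable g volume s t :=
    (intervalIntegrable_iff_integrableOn_Ioc_of_le hst).2 hg
  have huIcc : Set.uIcc s t = Set.Icc s t := Set.uIcc_of_le hst
  have step1 : (∫ y in s..t, p y * (∫ x in s..y, g x))
      = ∫ y in s..t, pext y * (∫ x in s..y, g x) := by
    refine intervalIntegral.integral_congr (fun y hy => ?_)
    rw [huIcc] at hy
    rw [hpext]; simp only [Function.comp_apply, hcleq y hy]
  have step2 := swap_triangle hst hpextc hg
  have step3 : (∫ x in s..t, (∫ y in x..t, pext y) * g x)
      = ∫ x in s..t, (w t - w x) * g x := by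
    refine intervalIntegral.integral_congr (fun x hx => ?_)
    rw [huIcc] at hx
    have hftc : ∫ y in x..t, pext y = w t - w x := by
      refine intervalIntegral.integral_eq_sub_of_hasDerivAt (fun y hy => ?_)
        (hpextc.intervalIntegrable x t)
      rw [Set.uIcc_of_le hx.2] at hy
      have hyIcc : y ∈ Set.Icc s t := ⟨hx.1.trans hy.1, hy.2⟩
      have : pext y = p y := by rw [hpext]; simp only [Function.comp_apply, hcleq y hyIcc]
      rw [this]
      exact hw y hyIcc
    rw [hftc]
  have step4 : (∫ x in s..t, (w t - w x) * g x)
      = w t * (∫ x in s..t, g x) - ∫ x in s..t, w x * g x := by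
    have hcongr : (∫ x in s..t, (w t - w x) * g x)
        = ∫ x in s..t, (w t * g x - wext x * g x) := by
      refine intervalIntegral.integral_congr (fun x hx => ?_)
      rw [huIcc] at hx
      rw [hwext]; simp only [Function.comp_apply, hcleq x hx]; ring
    have hcongr2 : (∫ x in s..t, w x * g x) = ∫ x in s..t, wext x * g x := by
      refine intervalIntegral.integral_congr (fun x hx => ?_)
      rw [huIcc] at hx
      rw [hwext]; simp only [Function.comp_apply, hcleq x hx]
    rw [hcongr, hcongr2, intervalIntegral.integral_sub (hIg.const_mul _) hIwg]
    congr 1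
    simp_rw [← smul_eq_mul (a := w t)]
    rw [intervalIntegral.integral_smul]
  rw [step1, step2, step3, step4]
  ring

lemma wronskian_eq_on_Ioo_aux {α β : ℝ} {q : ℝ → ℝ} {lam : ℂ} {u u' v v' : ℝ → ℂ}
    (hq : MeasureTheory.IntegrableOn q (Set.Ioo α β))
    (hu1 : ∀ x ∈ Set.Ioo α β, HasDerivAt u (u' x) x)
    (hu2 : ∀ s ∈ Set.Ioo α β, ∀ t ∈ Set.Ioo α β,
      u' t - u' s = ∫ x in s..t, ((q x : ℂ) - lam) * u x)
    (hv1 : ∀ x ∈ Set.Ioo α β, HasDerivAt v (v' x) x)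
    (hv2 : ∀ s ∈ Set.Ioo α β, ∀ t ∈ Set.Ioo α β,
      v' t - v' s = ∫ x in s..t, ((q x : ℂ) - lam) * v x)
    {s t : ℝ} (hs : s ∈ Set.Ioo α β) (ht : t ∈ Set.Ioo α β) (hst : s ≤ t) :
    u t * v' t - u' t * v t = u s * v' s - u' s * v s := by
  have hsub : Set.Icc s t ⊆ Set.Ioo α β := fun x hx => ⟨lt_of_lt_of_le hs.1 hx.1,
    lt_of_le_of_lt hx.2 ht.2⟩
  set gu : ℝ → ℂ := fun x => ((q x : ℂ) - lam) * u x with hgu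
  set gv : ℝ → ℂ := fun x => ((q x : ℂ) - lam) * v x with hgv
  -- continuity of u, v on Icc s t
  have huc : ContinuousOn u (Set.Icc s t) := fun x hx =>
    (hu1 x (hsub hx)).continuousAt.continuousWithinAt
  have hvc : ContinuousOn v (Set.Icc s t) := fun x hx =>
    (hv1 x (hsub hx)).continuousAt.continuousWithinAt
  -- integrability of gu, gv on Ioc s t
  have hqI : MeasureTheory.IntegrableOn (fun x => ((q x : ℂ) - lam)) (Set.Ioc s t) := by
    have hq' : MeasureTheory.IntegrableOn q (Set.Ioc s t) :=
      hq.mono_set (fun x hx => hsub (Set.Ioc_subset_Icc_self hx))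
    exact (hq'.ofReal.sub (integrableOn_const measure_Ioc_lt_top.ne))
  obtain ⟨Cu, hCu⟩ := isCompact_Icc.exists_bound_of_continuousOn huc
  obtain ⟨Cv, hCv⟩ := isCompact_Icc.exists_bound_of_continuousOn hvc
  set cl : ℝ → ℝ := fun y => max s (min y t) with hcl
  have hclcont : Continuous cl := continuous_const.max (continuous_id.min continuous_const)
  have hclmem : ∀ y, cl y ∈ Set.Icc s t := fun y =>
    ⟨le_max_left _ _, max_le hst (min_le_right _ _)⟩
  have hcleq : ∀ y ∈ Set.Icc s t, cl y = y := by
    intro y hy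
    simp only [hcl]
    rw [min_eq_left hy.2, max_eq_right hy.1]
  have hguI : MeasureTheory.IntegrableOn gu (Set.Ioc s t) := by
    have : MeasureTheory.IntegrableOn (fun x => (u ∘ cl) x * ((q x : ℂ) - lam)) (Set.Ioc s t) :=
      hqI.bdd_mul (huc.comp_continuous hclcont hclmem).aestronglyMeasurable
        (Filter.Eventually.of_forall fun x => hCu _ (hclmem x))
    refine (MeasureTheory.integrableOn_congr_fun (fun x hx => ?_) measurableSet_Ioc).1 this
    have := hcleq x (Set.Ioc_subset_Icc_self hx)
    simp only [Function.comp_apply, this, hgu]; ring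
  have hgvI : MeasureTheory.IntegrableOn gv (Set.Ioc s t) := by
    have : MeasureTheory.IntegrableOn (fun x => (v ∘ cl) x * ((q x : ℂ) - lam)) (Set.Ioc s t) :=
      hqI.bdd_mul (hvc.comp_continuous hclcont hclmem).aestronglyMeasurable
        (Filter.Eventually.of_forall fun x => hCv _ (hclmem x))
    refine (MeasureTheory.integrableOn_congr_fun (fun x hx => ?_) measurableSet_Ioc).1 this
    have := hcleq x (Set.Ioc_subset_Icc_self hx)
    simp only [Function.comp_apply, this, hgv]; ring
  have huIcc : Set.uIcc s t = Set.Icc s t := Set.uIcc_of_le hst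
  -- u', v' equal s-based primitives on Icc s t
  have hBu : ∀ y ∈ Set.Icc s t, u' y = u' s + ∫ x in s..y, gu x := by
    intro y hy
    have := hu2 s hs y (hsub hy)
    rw [← this]; ring
  have hBv : ∀ y ∈ Set.Icc s t, v' y = v' s + ∫ x in s..y, gv x := by
    intro y hy
    have := hv2 s hs y (hsub hy)
    rw [← this]; ring
  -- continuity of u', v' on Icc s t
  have hguIcc : MeasureTheory.IntegrableOn gu (Set.Icc s t) :=
    (integrableOn_Icc_iff_integrableOn_Ioc).2 hguI
  have hgvIcc : MeasureTheory.IntegrableOn gv (Set.Icc s t) :=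
    (integrableOn_Icc_iff_integrableOn_Ioc).2 hgvI
  have hprimu : ContinuousOn (fun y => ∫ x in s..y, gu x) (Set.Icc s t) := by
    have := intervalIntegral.continuousOn_primitive_interval (a := s) (b := t) (μ := volume)
      (huIcc.symm ▸ hguIcc)
    rwa [huIcc] at this
  have hprimv : ContinuousOn (fun y => ∫ x in s..y, gv x) (Set.Icc s t) := by
    have := intervalIntegral.continuousOn_primitive_interval (a := s) (b := t) (μ := volume)
      (huIcc.symm ▸ hgvIcc)
    rwa [huIcc] at this
  have hu'c : ContinuousOn u' (Set.Icc s t) :=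
    (continuousOn_const.add hprimu).congr hBu
  have hv'c : ContinuousOn v' (Set.Icc s t) :=
    (continuousOn_const.add hprimv).congr hBv
  -- FTC for u and v
  have hIu' : IntervalIntegrable u' volume s t := by
    have := hu'c; rw [← huIcc] at this; exact this.intervalIntegrable
  have hIv' : IntervalIntegrable v' volume s t := by
    have := hv'c; rw [← huIcc] at this; exact this.intervalIntegrable
  have hFTCu : u t - u s = ∫ y in s..t, u' y :=
    (intervalIntegral.integral_eq_sub_of_hasDerivAt
      (fun y hy => hu1 y (hsub (huIcc ▸ hy))) hIu').symm
  have hFTCv : v t - v s = ∫ y in s..t, v' y :=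
    (intervalIntegral.integral_eq_sub_of_hasDerivAt
      (fun y hy => hv1 y (hsub (huIcc ▸ hy))) hIv').symm
  have hk1 : u t * ∫ x in s..t, gv x = (∫ x in s..t, u x * gv x)
      + ∫ y in s..t, u' y * (∫ x in s..y, gv x) :=
    key_mul hst (fun x hx => hu1 x (hsub hx)) hu'c hgvI
  have hk2 : v t * ∫ x in s..t, gu x = (∫ x in s..t, v x * gu x)
      + ∫ y in s..t, v' y * (∫ x in s..y, gu x) :=
    key_mul hst (fun x hx => hv1 x (hsub hx)) hv'c hguI
  have hK : (∫ x in s..t, u x * gv x) = ∫ x in s..t, v x * gu x := by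
    refine intervalIntegral.integral_congr (fun x hx => ?_)
    simp only [hgu, hgv]; ring
  have hIprimu' : IntervalIntegrable (fun y => u' y * (∫ x in s..y, gv x)) volume s t := by
    apply ContinuousOn.intervalIntegrable; rw [huIcc]; exact hu'c.mul hprimv
  have hIprimv' : IntervalIntegrable (fun y => v' y * (∫ x in s..y, gu x)) volume s t := by
    apply ContinuousOn.intervalIntegrable; rw [huIcc]; exact hv'c.mul hprimu
  have hF1 : (∫ y in s..t, u' y * v' y)
      = v' s * (∫ y in s..t, u' y) + ∫ y in s..t, u' y * (∫ x in s..y, gv x) := by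
    have hcg : ∀ y ∈ Set.uIcc s t, u' y * v' y
        = v' s * u' y + u' y * (∫ x in s..y, gv x) := by
      intro y hy; rw [huIcc] at hy; rw [hBv y hy]; ring
    rw [intervalIntegral.integral_congr hcg,
      intervalIntegral.integral_add (hIu'.const_mul _) hIprimu']
    congr 1
    simp_rw [← smul_eq_mul (a := v' s)]
    rw [intervalIntegral.integral_smul]
  have hF2 : (∫ y in s..t, v' y * u' y)
      = u' s * (∫ y in s..t, v' y) + ∫ y in s..t, v' y * (∫ x in s..y, gu x) := by
    have hcg : ∀ y ∈ Set.uIcc s t, v' y * u' y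
        = u' s * v' y + v' y * (∫ x in s..y, gu x) := by
      intro y hy; rw [huIcc] at hy; rw [hBu y hy]; ring
    rw [intervalIntegral.integral_congr hcg,
      intervalIntegral.integral_add (hIv'.const_mul _) hIprimv']
    congr 1
    simp_rw [← smul_eq_mul (a := u' s)]
    rw [intervalIntegral.integral_smul]
  have hcomm : (∫ y in s..t, u' y * v' y) = ∫ y in s..t, v' y * u' y :=
    intervalIntegral.integral_congr (fun x _ => mul_comm _ _)
  have h8 : v' s * (∫ y in s..t, u' y) + (∫ y in s..t, u' y * (∫ x in s..y, gv x))
      = u' s * (∫ y in s..t, v' y) + ∫ y in s..t, v' y * (∫ x in s..y, gu x) :=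
    hF1.symm.trans (hcomm.trans hF2)
  have h1 : u' t - u' s = ∫ x in s..t, gu x := hu2 s hs t ht
  have h2 : v' t - v' s = ∫ x in s..t, gv x := hv2 s hs t ht
  linear_combination (u t) * h2 - (v t) * h1 + (v' s) * hFTCu - (u' s) * hFTCv
    + hk1 - hk2 + hK + h8

lemma wronskian_eq_on_Ioo {α β : ℝ} {q : ℝ → ℝ} {lam : ℂ} {u u' v v' : ℝ → ℂ}
    (hq : MeasureTheory.IntegrableOn q (Set.Ioo α β))
    (hu1 : ∀ x ∈ Set.Ioo α β, HasDerivAt u (u' x) x)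
    (hu2 : ∀ s ∈ Set.Ioo α β, ∀ t ∈ Set.Ioo α β,
      u' t - u' s = ∫ x in s..t, ((q x : ℂ) - lam) * u x)
    (hv1 : ∀ x ∈ Set.Ioo α β, HasDerivAt v (v' x) x)
    (hv2 : ∀ s ∈ Set.Ioo α β, ∀ t ∈ Set.Ioo α β,
      v' t - v' s = ∫ x in s..t, ((q x : ℂ) - lam) * v x)
    {s t : ℝ} (hs : s ∈ Set.Ioo α β) (ht : t ∈ Set.Ioo α β) :
    u t * v' t - u' t * v t = u s * v' s - u' s * v s := by
  rcases le_total s t with hst | hst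
  · exact wronskian_eq_on_Ioo_aux hq hu1 hu2 hv1 hv2 hs ht hst
  · exact (wronskian_eq_on_Ioo_aux hq hu1 hu2 hv1 hv2 ht hs hst).symm

end AuxLemmas

/-- If `u` and `v` are transmission solutions at the same spectral parameter
`λ ∈ ℂ`, then the modified Wronskian `x ↦ w x * (u x * v' x - u' x * v x)` takes the same
value at every point of `[0, π]` other than the transmission points `d 1, …, d (m-1)`. -/
theorem modified_wronskian_constant
    (m : ℕ) (d a b c : ℕ → ℝ) (q : ℝ → ℝ)
    (hm : 2 ≤ m) (hd0 : d 0 = 0) (hdm : d m = Real.pi)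
    (hdmono : ∀ i < m, d i < d (i + 1))
    (hab : ∀ i, 1 ≤ i → i < m → 0 < a i * b i)
    (hq : MeasureTheory.IntegrableOn q (Set.Ioo 0 Real.pi))
    (lam : ℂ) (u u' v v' : ℝ → ℂ)
    (hu : IsTransSol m d a b c q lam u u')
    (hv : IsTransSol m d a b c q lam v v') :
    ∃ W : ℂ, ∀ x ∈ Set.Icc (0 : ℝ) Real.pi, (∀ i, 1 ≤ i → i < m → x ≠ d i) →
      (wfun m d a b x : ℂ) * (u x * v' x - u' x * v x) = W := by
  obtain ⟨hu1, hu2, hu3, hu4, hu5⟩ := hu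
  obtain ⟨hv1, hv2, hv3, hv4, hv5⟩ := hv
  set h : ℝ → ℂ := fun x => u x * v' x - u' x * v x with hh
  have hmono : ∀ i j, i ≤ j → j ≤ m → d i ≤ d j := by
    intro i j hij hjm
    induction j with
    | zero =>
      have : i = 0 := by omega
      simp [this]
    | succ n ih =>
      rcases eq_or_lt_of_le hij with h' | h'
      · rw [h']
      · exact le_trans (ih (by omega) (by omega))
          (hdmono n (by omega)).le
  have hstrict : ∀ i j, i < j → j ≤ m → d i < d j := by
    intro i j hij hjm
    cases j with
    | zero => omega
    | succ n =>
      exact lt_of_le_of_lt (hmono i n (by omega) (by omega)) (hdmono n (by omega))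
  have hconst : ∀ j < m, ∀ s ∈ Set.Ioo (d j) (d (j+1)), ∀ t ∈ Set.Ioo (d j) (d (j+1)),
      h t = h s := by
    intro j hj s hs t ht
    have hsubset : Set.Ioo (d j) (d (j+1)) ⊆ Set.Ioo 0 Real.pi := by
      intro x hx
      constructor
      · have h0j : d 0 ≤ d j := hmono 0 j (Nat.zero_le _) hj.le
        rw [hd0] at h0j
        exact lt_of_le_of_lt h0j hx.1
      · have hjm : d (j+1) ≤ d m := hmono (j+1) m (by omega) le_rfl
        rw [hdm] at hjm
        exact lt_of_lt_of_le hx.2 hjm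
    exact wronskian_eq_on_Ioo (hq.mono_set hsubset) (hu1 j hj) (hu2 j hj)
      (hv1 j hj) (hv2 j hj) hs ht
  set mid : ℕ → ℝ := fun j => (d j + d (j+1)) / 2 with hmid
  have hmidmem : ∀ j < m, mid j ∈ Set.Ioo (d j) (d (j+1)) := by
    intro j hj
    have := hdmono j hj
    simp only [hmid, Set.mem_Ioo]
    constructor <;> linarith
  set cc : ℕ → ℂ := fun j => h (mid j) with hcc
  have hval : ∀ j < m, ∀ x ∈ Set.Ioo (d j) (d (j+1)), h x = cc j :=
    fun j hj x hx => hconst j hj (mid j) (hmidmem j hj) x hx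
  have hright : ∀ j < m, h (d j) = cc j := by
    intro j hj
    have hcw : ContinuousWithinAt h (Set.Ici (d j)) (d j) :=
      ((hu3 j hj).1.mul (hv3 j hj).2).sub ((hu3 j hj).2.mul (hv3 j hj).1)
    have htend : Filter.Tendsto h (nhdsWithin (d j) (Set.Ioi (d j))) (nhds (h (d j))) :=
      (hcw.mono Set.Ioi_subset_Ici_self).tendsto
    have hev : h =ᶠ[nhdsWithin (d j) (Set.Ioi (d j))] fun _ => cc j := by
      filter_upwards [Ioo_mem_nhdsGT (hdmono j hj)] with x hx
      exact hval j hj x hx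
    exact tendsto_nhds_unique (htend.congr' hev) tendsto_const_nhds
  have hjump : ∀ i, 1 ≤ i → i < m → h (d i) = (a i : ℂ) * (b i : ℂ) * cc (i - 1) := by
    intro i h1i him
    obtain ⟨yl, yl', huyl, huyl', hueq, hueq'⟩ := hu5 i h1i him
    obtain ⟨zl, zl', hvzl, hvzl', hveq, hveq'⟩ := hv5 i h1i him
    have hi1 : i - 1 + 1 = i := by omega
    have hlt : d (i-1) < d i := by
      have := hdmono (i-1) (by omega); rwa [hi1] at this
    have htend : Filter.Tendsto h (nhdsWithin (d i) (Set.Iio (d i)))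
        (nhds (yl * zl' - yl' * zl)) := (huyl.mul hvzl').sub (huyl'.mul hvzl)
    have hev : h =ᶠ[nhdsWithin (d i) (Set.Iio (d i))] fun _ => cc (i-1) := by
      filter_upwards [Ioo_mem_nhdsLT hlt] with x hx
      refine hval (i-1) (by omega) x ?_
      rwa [hi1]
    have hlim : yl * zl' - yl' * zl = cc (i-1) :=
      tendsto_nhds_unique (htend.congr' hev) tendsto_const_nhds
    show u (d i) * v' (d i) - u' (d i) * v (d i) = _
    rw [hueq, hueq', hveq, hveq', ← hlim]
    ring
  have hleftpi : h (d m) = cc (m - 1) := by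
    have hm1 : m - 1 + 1 = m := by omega
    have hlt : d (m-1) < d m := by
      have := hdmono (m-1) (by omega); rwa [hm1] at this
    have hcw : ContinuousWithinAt h (Set.Iic (d m)) (d m) :=
      (hu4.1.mul hv4.2).sub (hu4.2.mul hv4.1)
    have htend : Filter.Tendsto h (nhdsWithin (d m) (Set.Iio (d m))) (nhds (h (d m))) :=
      (hcw.mono Set.Iio_subset_Iic_self).tendsto
    have hev : h =ᶠ[nhdsWithin (d m) (Set.Iio (d m))] fun _ => cc (m-1) := by
      filter_upwards [Ioo_mem_nhdsLT hlt] with x hx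
      refine hval (m-1) (by omega) x ?_
      rwa [hm1]
    exact tendsto_nhds_unique (htend.congr' hev) tendsto_const_nhds
  have hrec : ∀ i, 1 ≤ i → i < m → cc i = (a i : ℂ) * (b i : ℂ) * cc (i-1) :=
    fun i h1 h2 => (hright i h2).symm.trans (hjump i h1 h2)
  have hprodc : ∀ j, j ≤ m - 1 →
      (∏ i ∈ Finset.Icc 1 j, ((a i : ℂ) * (b i : ℂ))⁻¹) * cc j = cc 0 := by
    intro j
    induction j with
    | zero => intro _; simp
    | succ n ih =>
      intro hj
      have h1n : 1 ≤ n + 1 := by omega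
      have hnm : n + 1 < m := by omega
      rw [Finset.prod_Icc_succ_top h1n, hrec (n+1) h1n hnm]
      have hne : (a (n+1) : ℂ) * (b (n+1) : ℂ) ≠ 0 := by
        have := hab (n+1) h1n hnm
        have : (a (n+1) * b (n+1) : ℝ) ≠ 0 := ne_of_gt this
        exact_mod_cast this
      have heq : (∏ i ∈ Finset.Icc 1 n, ((a i : ℂ) * (b i : ℂ))⁻¹)
          * ((a (n+1) : ℂ) * (b (n+1) : ℂ))⁻¹
          * ((a (n+1) : ℂ) * (b (n+1) : ℂ) * cc n)
          = (∏ i ∈ Finset.Icc 1 n, ((a i : ℂ) * (b i : ℂ))⁻¹) * cc n := by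
        rw [mul_assoc, inv_mul_cancel_left₀ hne]
      simp only [Nat.add_sub_cancel]
      rw [heq, ih (by omega)]
  have hwf : ∀ j, j ≤ m - 1 → ∀ x : ℝ, (∀ i, 1 ≤ i → i ≤ j → d i < x) →
      (∀ i, j < i → i ≤ m - 1 → ¬ d i < x) →
      wfun m d a b x = ∏ i ∈ Finset.Icc 1 j, (a i * b i)⁻¹ := by
    intro j hj x hlt hge
    rw [wfun]
    rw [← Finset.prod_subset (Finset.Icc_subset_Icc_right hj)
      (fun i hi hni => ?_)]
    · exact Finset.prod_congr rfl (fun i hi => by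
        rw [Finset.mem_Icc] at hi
        exact if_pos (hlt i hi.1 hi.2))
    · rw [Finset.mem_Icc] at hi hni
      exact if_neg (hge i (by omega) (by omega))
  refine ⟨cc 0, ?_⟩
  intro x hx hxne
  have hhx : u x * v' x - u' x * v x = h x := rfl
  rw [hhx]
  by_cases hx0 : x = 0
  · subst hx0
    have hw0 : wfun m d a b 0 = 1 := by
      rw [wfun]
      apply Finset.prod_eq_one
      intro i hi
      rw [Finset.mem_Icc] at hi
      have hpos : 0 < d i := by
        have := hstrict 0 i (by omega) (by omega)
        rwa [hd0] at this
      rw [if_neg (by linarith)]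
    rw [hw0]
    have h0 : h 0 = cc 0 := by
      have := hright 0 (by omega)
      rwa [hd0] at this
    rw [h0]
    simp
  by_cases hxpi : x = Real.pi
  · subst hxpi
    have hwpi : wfun m d a b Real.pi = ∏ i ∈ Finset.Icc 1 (m-1), (a i * b i)⁻¹ := by
      refine hwf (m-1) le_rfl Real.pi (fun i h1 h2 => ?_) (fun i h1 h2 => by omega)
      have := hstrict i m (by omega) le_rfl
      rwa [hdm] at this
    have hpival : h Real.pi = cc (m-1) := by rw [← hdm]; exact hleftpi
    rw [hwpi, hpival]
    have := hprodc (m-1) le_rfl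
    rw [← this]
    push_cast
    ring
  · have hx0' : 0 < x := lt_of_le_of_ne hx.1 (Ne.symm hx0)
    have hxpi' : x < Real.pi := lt_of_le_of_ne hx.2 hxpi
    set j := Nat.findGreatest (fun i => d i < x) m with hjdef
    have hd0x : d 0 < x := by rw [hd0]; exact hx0'
    have hjP : d j < x := Nat.findGreatest_spec (P := fun i => d i < x) (Nat.zero_le m) hd0x
    have hjm : j ≤ m := Nat.findGreatest_le (P := fun i => d i < x) m
    have hjlt : j < m := by
      rcases eq_or_lt_of_le hjm with h' | h'
      · exfalso
        rw [h'] at hjP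
        rw [hdm] at hjP
        linarith
      · exact h'
    have hxlt : x < d (j+1) := by
      have hnot : ¬ d (j+1) < x :=
        Nat.findGreatest_is_greatest (P := fun i => d i < x) (n := m)
          (by rw [hjdef]; omega) (by omega)
      have hne : x ≠ d (j+1) := by
        by_cases hj1 : j + 1 < m
        · exact hxne (j+1) (by omega) hj1
        · have : j + 1 = m := by omega
          rw [this, hdm]
          exact hxpi
      cases' (lt_or_eq_of_le (not_lt.1 hnot)) with h' h'
      · exact h'
      · exact absurd h' hne
    have hxmem : x ∈ Set.Ioo (d j) (d (j+1)) := ⟨hjP, hxlt⟩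
    have hwx : wfun m d a b x = ∏ i ∈ Finset.Icc 1 j, (a i * b i)⁻¹ := by
      refine hwf j (by omega) x (fun i h1 h2 => ?_) (fun i h1 h2 => ?_)
      · exact lt_of_le_of_lt (hmono i j h2 hjm) hjP
      · push_neg
        exact le_trans hxlt.le (hmono (j+1) i (by omega) (by omega))
    rw [hwx, hval j hjlt x hxmem]
    have := hprodc j (by omega)
    rw [← this]
    push_cast
    ring
end
end

section
/- Every eigenvalue of the problem L is real, and every eigenvalue is simple in the following sense: if u and v are two nonzero transmission solutions at the same λ both satisfying the boundary conditions y'(0) + h y(0) = 0 and y'(π) + H y(π) = 0, then u and v are scalar multiples of each other. (This rests on the fact that a transmission solution is uniquely determined by the Cauchy data y(x₀±0) = f₀, y'(x₀±0) = f₁ at any point x₀ ∈ [0,π].) -/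
open MeasureTheory Set Filter Topology Finset
open scoped Real BigOperators ComplexConjugate

noncomputable section

/-- `lam` is an eigenvalue of the problem `L`: there is a nonzero transmission solution at `lam`
satisfying the Robin boundary conditions `y' 0 + h * y 0 = 0` and `y' π + H * y π = 0`. -/
def IsEigen (m : ℕ) (d a b c : ℕ → ℝ) (q : ℝ → ℝ) (h H : ℝ) (lam : ℂ) : Prop :=
  ∃ y y' : ℝ → ℂ, IsTransSol m d a b c q lam y y' ∧
    (∃ x ∈ Set.Icc (0 : ℝ) Real.pi, y x ≠ 0) ∧
    y' 0 + (h : ℂ) * y 0 = 0 ∧ y' Real.pi + (H : ℂ) * y Real.pi = 0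

/-- conjugation commutes with interval integrals -/
lemma conj_intervalIntegral (f : ℝ → ℂ) (s t : ℝ) :
    (starRingEnd ℂ) (∫ x in s..t, f x) = ∫ x in s..t, (starRingEnd ℂ) (f x) := by
  rcases le_total s t with hle | hle
  · rw [intervalIntegral.integral_of_le hle, intervalIntegral.integral_of_le hle, ← integral_conj]
  · rw [intervalIntegral.integral_of_ge hle, intervalIntegral.integral_of_ge hle, map_neg,
      ← integral_conj]

lemma qmul_integrableOn {α β : ℝ} {q : ℝ → ℝ} (hq : IntegrableOn q (Ioc α β)) (lam : ℂ)
    {u : ℝ → ℂ} (hu : ContinuousOn u (Icc α β)) :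
    IntegrableOn (fun x => ((q x : ℂ) - lam) * u x) (Ioc α β) := by
  have h1 : IntegrableOn (fun x => ((q x : ℂ) - lam)) (Ioc α β) :=
    hq.ofReal.sub (integrableOn_const measure_Ioc_lt_top.ne)
  exact h1.mul_continuousOn_of_subset hu measurableSet_Ioc isCompact_Icc Ioc_subset_Icc_self

lemma restrict_ae_ne {A : Set ℝ} (β : ℝ) : ∀ᵐ x ∂(volume.restrict A), x ≠ β := by
  refine ae_restrict_of_ae ?_
  have h : {x : ℝ | ¬ x ≠ β} = {β} := by ext z; simp
  rw [ae_iff, h]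
  exact measure_singleton β

lemma fubini_primitive {s t : ℝ} {φ ψ : ℝ → ℂ}
    (hφ : IntegrableOn φ (Ioc s t)) (hψ : IntegrableOn ψ (Ioc s t)) :
    ((∫ x in Ioc s t, φ x * ∫ y in Ioc s x, ψ y)
      + ∫ x in Ioc s t, ψ x * ∫ y in Ioc s x, φ y)
      = (∫ x in Ioc s t, φ x) * ∫ x in Ioc s t, ψ x := by
  have hprod : Integrable (fun p : ℝ × ℝ => φ p.1 * ψ p.2)
      ((volume.restrict (Ioc s t)).prod (volume.restrict (Ioc s t))) :=
    Integrable.mul_prod hφ hψ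
  have hT : MeasurableSet {p : ℝ × ℝ | p.2 ≤ p.1} :=
    measurableSet_le measurable_snd measurable_fst
  have key := integral_add_compl hT hprod
  rw [integral_prod_mul] at key
  have hTpart : (∫ p in {p : ℝ × ℝ | p.2 ≤ p.1}, φ p.1 * ψ p.2
        ∂((volume.restrict (Ioc s t)).prod (volume.restrict (Ioc s t))))
      = ∫ x in Ioc s t, φ x * ∫ y in Ioc s x, ψ y := by
    rw [← integral_indicator hT, integral_prod _ (hprod.indicator hT)]
    refine setIntegral_congr_fun measurableSet_Ioc fun x hx => ?_
    have h1 : ∀ y : ℝ, ({p : ℝ × ℝ | p.2 ≤ p.1}.indicator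
        (fun p : ℝ × ℝ => φ p.1 * ψ p.2)) (x, y)
        = (Iic x).indicator (fun z => φ x * ψ z) y := by
      intro y
      by_cases hy : y ≤ x <;> simp [Set.indicator_apply, hy]
    calc (∫ y, ({p : ℝ × ℝ | p.2 ≤ p.1}.indicator (fun p : ℝ × ℝ => φ p.1 * ψ p.2)) (x, y)
          ∂(volume.restrict (Ioc s t)))
        = ∫ y, (Iic x).indicator (fun z => φ x * ψ z) y ∂(volume.restrict (Ioc s t)) := by
          simp_rw [h1]
      _ = ∫ y in Iic x, φ x * ψ y ∂(volume.restrict (Ioc s t)) :=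
          integral_indicator measurableSet_Iic
      _ = ∫ y in Iic x ∩ Ioc s t, φ x * ψ y := by
          rw [Measure.restrict_restrict measurableSet_Iic]
      _ = ∫ y in Ioc s x, φ x * ψ y := by
          have hset : Iic x ∩ Ioc s t = Ioc s x := by
            ext z
            simp only [Set.mem_inter_iff, Set.mem_Iic, Set.mem_Ioc]
            exact ⟨fun hz => ⟨hz.2.1, hz.1⟩, fun hz => ⟨hz.2, hz.1, hz.2.trans hx.2⟩⟩
          rw [hset]
      _ = φ x * ∫ y in Ioc s x, ψ y := integral_const_mul _ _
  have hTcpart : (∫ p in {p : ℝ × ℝ | p.2 ≤ p.1}ᶜ, φ p.1 * ψ p.2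
        ∂((volume.restrict (Ioc s t)).prod (volume.restrict (Ioc s t))))
      = ∫ y in Ioc s t, ψ y * ∫ x in Ioc s y, φ x := by
    rw [← integral_indicator hT.compl, integral_prod_symm _ (hprod.indicator hT.compl)]
    refine setIntegral_congr_fun measurableSet_Ioc fun y hy => ?_
    have h1 : ∀ x : ℝ, ({p : ℝ × ℝ | p.2 ≤ p.1}ᶜ.indicator
        (fun p : ℝ × ℝ => φ p.1 * ψ p.2)) (x, y)
        = (Iio y).indicator (fun z => φ z * ψ y) x := by
      intro x
      by_cases hxy : y ≤ x
      · simp [Set.indicator_apply, hxy, not_lt.2 hxy]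
      · simp [Set.indicator_apply, hxy, not_le.1 hxy]
    calc (∫ x, ({p : ℝ × ℝ | p.2 ≤ p.1}ᶜ.indicator (fun p : ℝ × ℝ => φ p.1 * ψ p.2)) (x, y)
          ∂(volume.restrict (Ioc s t)))
        = ∫ x, (Iio y).indicator (fun z => φ z * ψ y) x ∂(volume.restrict (Ioc s t)) := by
          simp_rw [h1]
      _ = ∫ x in Iio y, φ x * ψ y ∂(volume.restrict (Ioc s t)) :=
          integral_indicator measurableSet_Iio
      _ = ∫ x in Iio y ∩ Ioc s t, φ x * ψ y := by
          rw [Measure.restrict_restrict measurableSet_Iio]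
      _ = ∫ x in Ioo s y, φ x * ψ y := by
          have hset : Iio y ∩ Ioc s t = Ioo s y := by
            ext z
            simp only [Set.mem_inter_iff, Set.mem_Iio, Set.mem_Ioo]
            exact ⟨fun hz => ⟨hz.2.1, hz.1⟩, fun hz => ⟨hz.2, hz.1, hz.2.le.trans hy.2⟩⟩
          rw [hset]
      _ = ∫ x in Ioc s y, φ x * ψ y := setIntegral_congr_set Ioo_ae_eq_Ioc
      _ = (∫ x in Ioc s y, φ x) * ψ y := integral_mul_const _ _
      _ = ψ y * ∫ x in Ioc s y, φ x := mul_comm _ _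
  rw [hTpart, hTcpart] at key
  exact key


lemma cont_Ico {α β : ℝ} {w w₁ : ℝ → ℂ}
    (hwd : ∀ x ∈ Ioo α β, HasDerivAt w (w₁ x) x)
    (hwc : ContinuousWithinAt w (Ici α) α) : ContinuousOn w (Ico α β) := by
  intro x hx
  rcases eq_or_lt_of_le hx.1 with rfl | hαx
  · exact hwc.mono fun z hz => hz.1
  · exact ((hwd x ⟨hαx, hx.2⟩).continuousAt).continuousWithinAt

lemma deriv_rep {α β : ℝ} (hαβ : α < β) {w₁ f : ℝ → ℂ}
    (hrel : ∀ s ∈ Ioo α β, ∀ t ∈ Ioo α β, w₁ t - w₁ s = ∫ x in s..t, f x)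
    (hf : ∀ x ∈ Ico α β, IntegrableOn f (Ioc α x))
    (hwc₁ : ContinuousWithinAt w₁ (Ici α) α) :
    ∀ x ∈ Ico α β, w₁ x = w₁ α + ∫ y in Ioc α x, f y := by
  intro x hx
  rcases eq_or_lt_of_le hx.1 with rfl | hαx
  · simp
  have hxI : x ∈ Ioo α β := ⟨hαx, hx.2⟩
  have hne : (𝓝[Ioo α x] α).NeBot := by
    rw [nhdsWithin_Ioo_eq_nhdsGT hαx]; infer_instance
  have h1 : Tendsto (fun s => w₁ x - w₁ s) (𝓝[Ioo α x] α) (𝓝 (w₁ x - w₁ α)) :=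
    tendsto_const_nhds.sub (hwc₁.mono_left (nhdsWithin_mono _ fun z hz => hz.1.le))
  have hfint : IntegrableOn f (Icc α x) := by
    rw [integrableOn_Icc_iff_integrableOn_Ioc]; exact hf x hx
  have hcont : ContinuousOn (fun s => ∫ y in s..x, f y) (Icc α x) := by
    have h := intervalIntegral.continuousOn_primitive_interval_left
      (f := f) (a := α) (b := x) (μ := volume) (by rwa [uIcc_of_le hαx.le])
    rwa [uIcc_of_le hαx.le] at h
  have h2 : Tendsto (fun s => ∫ y in s..x, f y) (𝓝[Ioo α x] α) (𝓝 (∫ y in α..x, f y)) :=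
    (hcont α (left_mem_Icc.2 hαx.le)).mono_left
      (nhdsWithin_mono _ fun z hz => ⟨hz.1.le, hz.2.le⟩)
  have heq : (fun s => w₁ x - w₁ s) =ᶠ[𝓝[Ioo α x] α] fun s => ∫ y in s..x, f y :=
    eventuallyEq_of_mem self_mem_nhdsWithin fun s hs =>
      hrel s ⟨hs.1, hs.2.trans hx.2⟩ x hxI
  have hkey := tendsto_nhds_unique (Tendsto.congr' heq h1) h2
  rw [intervalIntegral.integral_of_le hαx.le] at hkey
  linear_combination hkey

lemma cont_rep {α β : ℝ} (hαβ : α < β) {w₁ f : ℝ → ℂ}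
    (hf : ∀ x ∈ Ico α β, IntegrableOn f (Ioc α x))
    (hrep : ∀ x ∈ Ico α β, w₁ x = w₁ α + ∫ y in Ioc α x, f y) :
    ContinuousOn w₁ (Ico α β) := by
  intro x hx
  have hxt₁ : x < (x + β) / 2 := by linarith [hx.2]
  have ht₁β : (x + β) / 2 < β := by linarith [hx.2]
  have hIccsub : Icc α ((x + β) / 2) ⊆ Ico α β := fun z hz => ⟨hz.1, lt_of_le_of_lt hz.2 ht₁β⟩
  have hfint : IntegrableOn f (Icc α ((x + β) / 2)) := by
    rw [integrableOn_Icc_iff_integrableOn_Ioc]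
    exact hf _ (hIccsub (right_mem_Icc.2 (le_trans hx.1 hxt₁.le)))
  have hcont : ContinuousOn (fun z => w₁ α + ∫ y in Ioc α z, f y) (Icc α ((x + β) / 2)) :=
    continuousOn_const.add (intervalIntegral.continuousOn_primitive hfint)
  have heq : EqOn w₁ (fun z => w₁ α + ∫ y in Ioc α z, f y) (Icc α ((x + β) / 2)) :=
    fun z hz => hrep z (hIccsub hz)
  have hc : ContinuousWithinAt w₁ (Icc α ((x + β) / 2)) x :=
    (hcont.congr heq) x ⟨hx.1, hxt₁.le⟩
  refine hc.mono_of_mem_nhdsWithin ?_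
  refine mem_of_superset (inter_mem_nhdsWithin (Ico α β) (Iic_mem_nhds hxt₁)) ?_
  exact fun z hz => ⟨hz.1.1, hz.2⟩

lemma w_rep {α β : ℝ} {w w₁ : ℝ → ℂ}
    (hwd : ∀ x ∈ Ioo α β, HasDerivAt w (w₁ x) x)
    (hwc : ContinuousWithinAt w (Ici α) α)
    (hw₁c : ContinuousOn w₁ (Ico α β)) :
    ∀ x ∈ Ico α β, w x = w α + ∫ y in Ioc α x, w₁ y := by
  intro x hx
  rcases eq_or_lt_of_le hx.1 with rfl | hαx
  · simp
  have hsub : Icc α x ⊆ Ico α β := fun z hz => ⟨hz.1, lt_of_le_of_lt hz.2 hx.2⟩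
  have h := intervalIntegral.integral_eq_sub_of_hasDeriv_right_of_le hαx.le
    ((cont_Ico hwd hwc).mono hsub)
    (fun z hz => (hwd z ⟨hz.1, hz.2.trans hx.2⟩).hasDerivWithinAt)
    (by
      apply ContinuousOn.intervalIntegrable
      rw [uIcc_of_le hαx.le]; exact hw₁c.mono hsub)
  rw [intervalIntegral.integral_of_le hαx.le] at h
  linear_combination -h

lemma parts {s t : ℝ} (hst : s ≤ t) {u u₁ v₁ g : ℝ → ℂ}
    (hu : ContinuousOn u (Icc s t)) (hud : ∀ x ∈ Ioo s t, HasDerivAt u (u₁ x) x)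
    (hu₁ : ContinuousOn u₁ (Icc s t)) (hg : IntegrableOn g (Ioc s t))
    (hv₁c : ContinuousOn v₁ (Icc s t))
    (hv₁ : ∀ x ∈ Icc s t, v₁ x = v₁ s + ∫ y in Ioc s x, g y) :
    u t * v₁ t - u s * v₁ s
      = (∫ x in Ioc s t, u x * g x) + ∫ x in Ioc s t, u₁ x * v₁ x := by
  have hu₁int : IntegrableOn u₁ (Ioc s t) :=
    (hu₁.integrableOn_Icc).mono_set Ioc_subset_Icc_self
  have hgIcc : IntegrableOn g (Icc s t) := by
    rwa [integrableOn_Icc_iff_integrableOn_Ioc]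
  have hurep : ∀ x ∈ Icc s t, u x = u s + ∫ y in Ioc s x, u₁ y := by
    intro x hx
    have h := intervalIntegral.integral_eq_sub_of_hasDeriv_right_of_le hx.1
      (hu.mono (Icc_subset_Icc le_rfl hx.2))
      (fun z hz => (hud z ⟨hz.1, lt_of_lt_of_le hz.2 hx.2⟩).hasDerivWithinAt)
      (by
        apply ContinuousOn.intervalIntegrable
        rw [uIcc_of_le hx.1]; exact hu₁.mono (Icc_subset_Icc le_rfl hx.2))
    rw [intervalIntegral.integral_of_le hx.1] at h
    linear_combination -h
  have hΦc : ContinuousOn (fun x => ∫ y in Ioc s x, u₁ y) (Icc s t) :=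
    intervalIntegral.continuousOn_primitive hu₁.integrableOn_Icc
  have hΨc : ContinuousOn (fun x => ∫ y in Ioc s x, g y) (Icc s t) :=
    intervalIntegral.continuousOn_primitive hgIcc
  have key := fubini_primitive (φ := g) (ψ := u₁) hg hu₁int
  have hΦg : IntegrableOn (fun x => (∫ y in Ioc s x, u₁ y) * g x) (Ioc s t) :=
    IntegrableOn.continuousOn_mul_of_subset hΦc hg isCompact_Icc measurableSet_Ioc
      Ioc_subset_Icc_self
  have h1 : ∫ x in Ioc s t, u x * g x
      = u s * (∫ y in Ioc s t, g y) + ∫ x in Ioc s t, (∫ y in Ioc s x, u₁ y) * g x := by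
    have e1 : ∫ x in Ioc s t, u x * g x
        = ∫ x in Ioc s t, (u s * g x + (∫ y in Ioc s x, u₁ y) * g x) :=
      setIntegral_congr_fun measurableSet_Ioc fun x hx => by
        rw [hurep x (Ioc_subset_Icc_self hx)]; ring
    rw [e1, integral_add (hg.const_mul _) hΦg, integral_const_mul]
  have hu₁Ψ : IntegrableOn (fun x => u₁ x * ∫ y in Ioc s x, g y) (Ioc s t) :=
    ((hu₁.mul hΨc).integrableOn_Icc).mono_set Ioc_subset_Icc_self
  have h2 : ∫ x in Ioc s t, u₁ x * v₁ x
      = (∫ y in Ioc s t, u₁ y) * v₁ s + ∫ x in Ioc s t, u₁ x * ∫ y in Ioc s x, g y := by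
    have e1 : ∫ x in Ioc s t, u₁ x * v₁ x
        = ∫ x in Ioc s t, (u₁ x * v₁ s + u₁ x * ∫ y in Ioc s x, g y) :=
      setIntegral_congr_fun measurableSet_Ioc fun x hx => by
        rw [hv₁ x (Ioc_subset_Icc_self hx)]; ring
    rw [e1, integral_add (hu₁int.mul_const _) hu₁Ψ, integral_mul_const]
  have hcomm : ∫ x in Ioc s t, (∫ y in Ioc s x, u₁ y) * g x
      = ∫ x in Ioc s t, g x * ∫ y in Ioc s x, u₁ y := by
    simp_rw [mul_comm]
  rw [hurep t (right_mem_Icc.2 hst), hv₁ t (right_mem_Icc.2 hst), h1, h2]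
  linear_combination -key - hcomm

lemma lagrange {s t : ℝ} (hst : s ≤ t) {u u₁ v v₁ f g : ℝ → ℂ}
    (hu : ContinuousOn u (Icc s t)) (hud : ∀ x ∈ Ioo s t, HasDerivAt u (u₁ x) x)
    (hu₁ : ContinuousOn u₁ (Icc s t))
    (hv : ContinuousOn v (Icc s t)) (hvd : ∀ x ∈ Ioo s t, HasDerivAt v (v₁ x) x)
    (hv₁ : ContinuousOn v₁ (Icc s t))
    (hf : IntegrableOn f (Ioc s t)) (hg : IntegrableOn g (Ioc s t))
    (hurep : ∀ x ∈ Icc s t, u₁ x = u₁ s + ∫ y in Ioc s x, f y)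
    (hvrep : ∀ x ∈ Icc s t, v₁ x = v₁ s + ∫ y in Ioc s x, g y) :
    (u t * v₁ t - u₁ t * v t) - (u s * v₁ s - u₁ s * v s)
      = (∫ x in Ioc s t, u x * g x) - ∫ x in Ioc s t, v x * f x := by
  have h1 := parts hst hu hud hu₁ hg hv₁ hvrep
  have h2 := parts hst hv hvd hv₁ hf hu₁ hurep
  have hcomm : ∫ x in Ioc s t, u₁ x * v₁ x = ∫ x in Ioc s t, v₁ x * u₁ x := by
    simp_rw [mul_comm]
  linear_combination h1 - h2 + hcomm
lemma continuousOn_update {α β : ℝ} (hαβ : α < β) {u : ℝ → ℂ} {ul : ℂ}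
    (hc : ContinuousOn u (Ico α β)) (hul : Tendsto u (𝓝[<] β) (𝓝 ul)) :
    ContinuousOn (Function.update u β ul) (Icc α β) := by
  have hUeq : EqOn (Function.update u β ul) u (Ico α β) := fun z hz =>
    Function.update_of_ne hz.2.ne _ _
  intro x hx
  rcases lt_or_eq_of_le hx.2 with hxβ | hxβ
  · have h1 : ContinuousWithinAt u (Ico α β) x := hc x ⟨hx.1, hxβ⟩
    have h2 : ContinuousWithinAt (Function.update u β ul) (Ico α β) x :=
      (h1.congr hUeq (hUeq ⟨hx.1, hxβ⟩))
    refine h2.mono_of_mem_nhdsWithin ?_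
    refine mem_of_superset (inter_mem_nhdsWithin (Icc α β) (Iio_mem_nhds hxβ)) ?_
    exact fun z hz => ⟨hz.1.1, hz.2⟩
  · subst hxβ
    show ContinuousWithinAt _ _ _
    unfold ContinuousWithinAt
    rw [show Icc α x = Ico α x ∪ {x} from (Ico_union_right hx.1).symm, nhdsWithin_union,
      Function.update_self, tendsto_sup]
    constructor
    · refine Tendsto.congr' ?_ (hul.mono_left (nhdsWithin_mono _ fun z hz => hz.2))
      exact eventuallyEq_of_mem self_mem_nhdsWithin fun z hz => (hUeq hz).symm
    · rw [nhdsWithin_singleton]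
      simpa using tendsto_pure_nhds (Function.update u x ul) x

lemma side_package {α β : ℝ} (hαβ : α < β) {q : ℝ → ℝ} (hq : IntegrableOn q (Ioc α β))
    {lam : ℂ} {u u₁ : ℝ → ℂ} {ul ul₁ : ℂ}
    (hud : ∀ x ∈ Ioo α β, HasDerivAt u (u₁ x) x)
    (hurel : ∀ s ∈ Ioo α β, ∀ t ∈ Ioo α β, u₁ t - u₁ s = ∫ x in s..t, ((q x : ℂ) - lam) * u x)
    (huc : ContinuousWithinAt u (Ici α) α) (huc₁ : ContinuousWithinAt u₁ (Ici α) α)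
    (hul : Tendsto u (𝓝[<] β) (𝓝 ul)) (hul₁ : Tendsto u₁ (𝓝[<] β) (𝓝 ul₁)) :
    ContinuousOn (Function.update u β ul) (Icc α β) ∧
    ContinuousOn (Function.update u₁ β ul₁) (Icc α β) ∧
    (∀ x ∈ Ioo α β, HasDerivAt (Function.update u β ul) (Function.update u₁ β ul₁ x) x) ∧
    IntegrableOn (fun x => ((q x : ℂ) - lam) * Function.update u β ul x) (Ioc α β) ∧
    (∀ x ∈ Icc α β, Function.update u₁ β ul₁ x
      = Function.update u₁ β ul₁ α + ∫ y in Ioc α x, ((q y : ℂ) - lam) * Function.update u β ul y) := by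
  set U := Function.update u β ul with hUdef
  set U₁ := Function.update u₁ β ul₁ with hU₁def
  have hUeq : ∀ z, z ≠ β → U z = u z := fun z hz => Function.update_of_ne hz _ _
  have hU₁eq : ∀ z, z ≠ β → U₁ z = u₁ z := fun z hz => Function.update_of_ne hz _ _
  have hucont : ContinuousOn u (Ico α β) := cont_Ico hud huc
  have hUc : ContinuousOn U (Icc α β) := continuousOn_update hαβ hucont hul
  have hFint : IntegrableOn (fun x => ((q x : ℂ) - lam) * U x) (Ioc α β) :=
    qmul_integrableOn hq lam hUc
  have hfae : (fun x => ((q x : ℂ) - lam) * u x)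
      =ᵐ[volume.restrict (Ioc α β)] (fun x => ((q x : ℂ) - lam) * U x) :=
    (restrict_ae_ne β).mono fun x hx => by simp only; rw [hUeq x hx]
  have hfint : IntegrableOn (fun x => ((q x : ℂ) - lam) * u x) (Ioc α β) :=
    hFint.congr hfae.symm
  have hfx : ∀ x ∈ Ico α β, IntegrableOn (fun x => ((q x : ℂ) - lam) * u x) (Ioc α x) :=
    fun x hx => hfint.mono_set (Ioc_subset_Ioc_right hx.2.le)
  have hrep := deriv_rep hαβ hurel hfx huc₁
  have hu₁cont : ContinuousOn u₁ (Ico α β) := cont_rep hαβ hfx hrep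
  have hU₁c : ContinuousOn U₁ (Icc α β) := continuousOn_update hαβ hu₁cont hul₁
  have hUd : ∀ x ∈ Ioo α β, HasDerivAt U (U₁ x) x := by
    intro x hx
    rw [hU₁eq x hx.2.ne]
    refine (hud x hx).congr_of_eventuallyEq ?_
    exact eventually_of_mem (compl_singleton_mem_nhds hx.2.ne) fun z hz => hUeq z hz
  have hFf : ∀ x, x ∈ Ico α β → (∫ y in Ioc α x, ((q y : ℂ) - lam) * U y)
      = ∫ y in Ioc α x, ((q y : ℂ) - lam) * u y := by
    intro x hx
    refine setIntegral_congr_fun measurableSet_Ioc fun z hz => ?_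
    rw [hUeq z (hz.2.trans_lt hx.2).ne]
  have hU₁rep : ∀ x ∈ Icc α β, U₁ x
      = U₁ α + ∫ y in Ioc α x, ((q y : ℂ) - lam) * U y := by
    have hU₁α : U₁ α = u₁ α := hU₁eq α hαβ.ne
    intro x hx
    rcases lt_or_eq_of_le hx.2 with hxβ | hxβ
    · rw [hU₁eq x hxβ.ne, hU₁α, hFf x ⟨hx.1, hxβ⟩]
      exact hrep x ⟨hx.1, hxβ⟩
    · -- x = β
      subst hxβ
      rw [show U₁ x = ul₁ from Function.update_self _ _ _, hU₁α]
      have hFIcc : IntegrableOn (fun y => ((q y : ℂ) - lam) * U y) (Icc α x) := by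
        rwa [integrableOn_Icc_iff_integrableOn_Ioc]
      have hprimc : ContinuousOn (fun z => u₁ α + ∫ y in Ioc α z, ((q y : ℂ) - lam) * U y)
          (Icc α x) := continuousOn_const.add (intervalIntegral.continuousOn_primitive hFIcc)
      have hne : (𝓝[Ioo α x] x).NeBot := by
        rw [nhdsWithin_Ioo_eq_nhdsLT hαβ]; infer_instance
      have h1 : Tendsto (fun z => u₁ α + ∫ y in Ioc α z, ((q y : ℂ) - lam) * U y)
          (𝓝[Ioo α x] x) (𝓝 (u₁ α + ∫ y in Ioc α x, ((q y : ℂ) - lam) * U y)) :=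
        (hprimc x (right_mem_Icc.2 hαβ.le)).mono_left
          (nhdsWithin_mono _ Ioo_subset_Icc_self)
      have h2 : Tendsto u₁ (𝓝[Ioo α x] x) (𝓝 ul₁) :=
        hul₁.mono_left (nhdsWithin_mono _ fun z hz => hz.2)
      have heq' : u₁ =ᶠ[𝓝[Ioo α x] x]
          fun z => u₁ α + ∫ y in Ioc α z, ((q y : ℂ) - lam) * U y := by
        refine eventuallyEq_of_mem self_mem_nhdsWithin fun z hz => ?_
        rw [hrep z ⟨hz.1.le, hz.2⟩, hFf z ⟨hz.1.le, hz.2⟩]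
      exact tendsto_nhds_unique (h2.congr' heq') h1
  exact ⟨hUc, hU₁c, hUd, hFint, hU₁rep⟩

lemma interval_lagrange {α β : ℝ} (hαβ : α < β) {q : ℝ → ℝ} (hq : IntegrableOn q (Ioc α β))
    {lam mu : ℂ} {u u₁ v v₁ : ℝ → ℂ} {ul ul₁ vl vl₁ : ℂ}
    (hud : ∀ x ∈ Ioo α β, HasDerivAt u (u₁ x) x)
    (hurel : ∀ s ∈ Ioo α β, ∀ t ∈ Ioo α β, u₁ t - u₁ s = ∫ x in s..t, ((q x : ℂ) - lam) * u x)
    (huc : ContinuousWithinAt u (Ici α) α) (huc₁ : ContinuousWithinAt u₁ (Ici α) α)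
    (hul : Tendsto u (𝓝[<] β) (𝓝 ul)) (hul₁ : Tendsto u₁ (𝓝[<] β) (𝓝 ul₁))
    (hvd : ∀ x ∈ Ioo α β, HasDerivAt v (v₁ x) x)
    (hvrel : ∀ s ∈ Ioo α β, ∀ t ∈ Ioo α β, v₁ t - v₁ s = ∫ x in s..t, ((q x : ℂ) - mu) * v x)
    (hvc : ContinuousWithinAt v (Ici α) α) (hvc₁ : ContinuousWithinAt v₁ (Ici α) α)
    (hvl : Tendsto v (𝓝[<] β) (𝓝 vl)) (hvl₁ : Tendsto v₁ (𝓝[<] β) (𝓝 vl₁)) :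
    (ul * vl₁ - ul₁ * vl) - (u α * v₁ α - u₁ α * v α)
      = (lam - mu) * ∫ x in Ioc α β, u x * v x := by
  obtain ⟨hUc, hU₁c, hUd, hFint, hU₁rep⟩ := side_package hαβ hq hud hurel huc huc₁ hul hul₁
  obtain ⟨hVc, hV₁c, hVd, hGint, hV₁rep⟩ := side_package hαβ hq hvd hvrel hvc hvc₁ hvl hvl₁
  have main := lagrange hαβ.le hUc hUd hU₁c hVc hVd hV₁c hFint hGint hU₁rep hV₁rep
  rw [Function.update_self, Function.update_self, Function.update_self, Function.update_self,
    Function.update_of_ne hαβ.ne, Function.update_of_ne hαβ.ne, Function.update_of_ne hαβ.ne,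
    Function.update_of_ne hαβ.ne] at main
  have hUG : IntegrableOn (fun x => Function.update u β ul x
      * (((q x : ℂ) - mu) * Function.update v β vl x)) (Ioc α β) :=
    IntegrableOn.continuousOn_mul_of_subset hUc hGint isCompact_Icc measurableSet_Ioc
      Ioc_subset_Icc_self
  have hVF : IntegrableOn (fun x => Function.update v β vl x
      * (((q x : ℂ) - lam) * Function.update u β ul x)) (Ioc α β) :=
    IntegrableOn.continuousOn_mul_of_subset hVc hFint isCompact_Icc measurableSet_Ioc
      Ioc_subset_Icc_self
  rw [← integral_sub hUG hVF] at main
  have hae : (fun x => Function.update u β ul x * (((q x : ℂ) - mu) * Function.update v β vl x)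
      - Function.update v β vl x * (((q x : ℂ) - lam) * Function.update u β ul x))
      =ᵐ[volume.restrict (Ioc α β)] (fun x => (lam - mu) * (u x * v x)) := by
    refine (restrict_ae_ne β).mono fun x hx => ?_
    simp only [Function.update_of_ne hx]
    ring
  rw [integral_congr_ae hae, integral_const_mul] at main
  exact main
lemma vanish {α β : ℝ} (hαβ : α < β) {q : ℝ → ℝ} (hq : IntegrableOn q (Ioc α β)) {lam : ℂ}
    {w w₁ : ℝ → ℂ}
    (hwd : ∀ x ∈ Ioo α β, HasDerivAt w (w₁ x) x)
    (hwrel : ∀ s ∈ Ioo α β, ∀ t ∈ Ioo α β, w₁ t - w₁ s = ∫ x in s..t, ((q x : ℂ) - lam) * w x)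
    (hwc : ContinuousWithinAt w (Ici α) α) (hwc₁ : ContinuousWithinAt w₁ (Ici α) α)
    (hw0 : w α = 0) (hw10 : w₁ α = 0) :
    ∀ x ∈ Ico α β, w x = 0 ∧ w₁ x = 0 := by
  have hwcont : ContinuousOn w (Ico α β) := cont_Ico hwd hwc
  have hfx : ∀ x ∈ Ico α β, IntegrableOn (fun z => ((q z : ℂ) - lam) * w z) (Ioc α x) := by
    intro x hx
    exact qmul_integrableOn (hq.mono_set (Ioc_subset_Ioc_right hx.2.le)) lam
      (hwcont.mono fun z hz => ⟨hz.1, lt_of_le_of_lt hz.2 hx.2⟩)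
  have hrep₁ := deriv_rep hαβ hwrel hfx hwc₁
  have hw₁cont := cont_rep hαβ hfx hrep₁
  have hrep := w_rep hwd hwc hw₁cont
  have hrep₁' : ∀ x ∈ Ico α β, w₁ x = ∫ y in Ioc α x, ((q y : ℂ) - lam) * w y := by
    intro x hx; rw [hrep₁ x hx, hw10, zero_add]
  have hrep' : ∀ x ∈ Ico α β, w x = ∫ y in Ioc α x, w₁ y := by
    intro x hx; rw [hrep x hx, hw0, zero_add]
  suffices hMain : ∀ t₁ ∈ Ioo α β, ∀ x ∈ Icc α t₁, w x = 0 ∧ w₁ x = 0 by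
    intro x hx
    rcases eq_or_lt_of_le hx.1 with rfl | hαx
    · exact ⟨hw0, hw10⟩
    · exact hMain ((x + β) / 2) ⟨by linarith [hx.2], by linarith [hx.2]⟩ x
        ⟨hx.1, by linarith [hx.2]⟩
  intro t₁ ht₁
  set K : ℝ → ℝ := fun x => 2 + 2 * ‖((q x : ℂ) - lam)‖ with hKdef
  set g : ℝ → ℝ := fun x => ‖w x‖ + ‖w₁ x‖ with hgdef
  have hsub : Icc α t₁ ⊆ Ico α β := fun z hz => ⟨hz.1, lt_of_le_of_lt hz.2 ht₁.2⟩
  have hwc' : ContinuousOn w (Icc α t₁) := hwcont.mono hsub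
  have hw₁c' : ContinuousOn w₁ (Icc α t₁) := hw₁cont.mono hsub
  have hgc : ContinuousOn g (Icc α t₁) := (hwc'.norm).add (hw₁c'.norm)
  have hgnn : ∀ x, 0 ≤ g x := fun x => add_nonneg (norm_nonneg _) (norm_nonneg _)
  have hKnn : ∀ x, 0 ≤ K x := fun x => by positivity
  have hqint' : IntegrableOn (fun x => ((q x : ℂ) - lam)) (Ioc α t₁) :=
    ((hq.mono_set (Ioc_subset_Ioc_right ht₁.2.le)).ofReal).sub
      (integrableOn_const measure_Ioc_lt_top.ne)
  have hKint : IntegrableOn K (Ioc α t₁) :=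
    (integrableOn_const measure_Ioc_lt_top.ne).add (hqint'.norm.const_mul 2)
  have hKgint : IntegrableOn (fun x => K x * g x) (Ioc α t₁) :=
    IntegrableOn.mul_continuousOn_of_subset hKint hgc measurableSet_Ioc isCompact_Icc
      Ioc_subset_Icc_self
  have hbound : ∀ x ∈ Icc α t₁, g x ≤ ∫ y in Ioc α x, K y * g y := by
    intro x hx
    have hxIco : x ∈ Ico α β := hsub hx
    have hw₁int : IntegrableOn w₁ (Ioc α x) :=
      ((hw₁c'.mono (Icc_subset_Icc_right hx.2)).integrableOn_Icc).mono_set Ioc_subset_Icc_self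
    have hfint : IntegrableOn (fun z => ((q z : ℂ) - lam) * w z) (Ioc α x) := hfx x hxIco
    have e1 : ‖w x‖ ≤ ∫ y in Ioc α x, ‖w₁ y‖ := by
      rw [hrep' x hxIco]; exact norm_integral_le_integral_norm _
    have e2 : ‖w₁ x‖ ≤ ∫ y in Ioc α x, ‖((q y : ℂ) - lam) * w y‖ := by
      rw [hrep₁' x hxIco]; exact norm_integral_le_integral_norm _
    have e3 : (∫ y in Ioc α x, ‖w₁ y‖) + ∫ y in Ioc α x, ‖((q y : ℂ) - lam) * w y‖
        = ∫ y in Ioc α x, (‖w₁ y‖ + ‖((q y : ℂ) - lam) * w y‖) :=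
      (integral_add hw₁int.norm hfint.norm).symm
    have e4 : (∫ y in Ioc α x, (‖w₁ y‖ + ‖((q y : ℂ) - lam) * w y‖))
        ≤ ∫ y in Ioc α x, K y * g y := by
      refine setIntegral_mono_on (hw₁int.norm.add hfint.norm)
        (hKgint.mono_set (Ioc_subset_Ioc_right hx.2)) measurableSet_Ioc fun y _ => ?_
      have hfy : ‖((q y : ℂ) - lam) * w y‖ = ‖((q y : ℂ) - lam)‖ * ‖w y‖ := norm_mul _ _
      have hKy : K y = 2 + 2 * ‖((q y : ℂ) - lam)‖ := rfl
      have hgy : g y = ‖w y‖ + ‖w₁ y‖ := rfl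
      rw [hfy, hKy, hgy]
      nlinarith [norm_nonneg (w y), norm_nonneg (w₁ y), norm_nonneg ((q y : ℂ) - lam)]
    calc g x = ‖w x‖ + ‖w₁ x‖ := rfl
      _ ≤ _ := by linarith [e1, e2, e4]
  clear_value K g
  set Z : Set ℝ := {τ | τ ∈ Icc α t₁ ∧ ∀ x ∈ Icc α τ, g x = 0} with hZdef
  have hgα : g α = 0 := by simp [hgdef, hw0, hw10]
  have hαZ : α ∈ Z := by
    refine ⟨left_mem_Icc.2 ht₁.1.le, fun x hx => ?_⟩
    have : x = α := le_antisymm hx.2 hx.1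
    rwa [this]
  have hZbdd : BddAbove Z := ⟨t₁, fun z hz => hz.1.2⟩
  have hZne : Z.Nonempty := ⟨α, hαZ⟩
  have hτmem : sSup Z ∈ Icc α t₁ := ⟨le_csSup hZbdd hαZ, csSup_le hZne fun z hz => hz.1.2⟩
  have hτZ : ∀ x ∈ Icc α (sSup Z), g x = 0 := by
    intro x hx
    rcases lt_or_eq_of_le hx.2 with hxτ | hxτ
    · obtain ⟨z', hz'Z, hxz'⟩ := exists_lt_of_lt_csSup hZne hxτ
      exact hz'Z.2 x ⟨hx.1, hxz'.le⟩
    · rcases eq_or_lt_of_le hx.1 with hαx | hαx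
      · rw [← hαx]; exact hgα
      · -- x = sSup Z, α < x : continuity from the left
        have hxt₁ : x ≤ t₁ := hxτ.le.trans hτmem.2
        have hcw : ContinuousWithinAt g (Icc α t₁) x := hgc x ⟨hx.1, hxt₁⟩
        have hne : (𝓝[Ico α x] x).NeBot := by
          rw [nhdsWithin_Ico_eq_nhdsLT hαx]; infer_instance
        have h1 : Tendsto g (𝓝[Ico α x] x) (𝓝 (g x)) :=
          hcw.mono_left (nhdsWithin_mono _ fun z hz => ⟨hz.1, hz.2.le.trans hxt₁⟩)
        have h2 : Tendsto g (𝓝[Ico α x] x) (𝓝 0) := by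
          refine Tendsto.congr' ?_ tendsto_const_nhds
          refine eventuallyEq_of_mem self_mem_nhdsWithin fun z hz => ?_
          rcases lt_or_eq_of_le hz.1 with hz1 | hz1
          · obtain ⟨z', hz'Z, hzz'⟩ := exists_lt_of_lt_csSup hZne (hz.2.trans_le hxτ.le)
            exact (hz'Z.2 z ⟨hz.1, hzz'.le⟩).symm
          · rw [← hz1]; exact hgα.symm
        exact tendsto_nhds_unique h1 h2
  have hτt₁ : sSup Z = t₁ := by
    by_contra hne'
    have hτlt : sSup Z < t₁ := lt_of_le_of_ne hτmem.2 hne'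
    have hKIcc : IntegrableOn K (Icc α t₁) := by
      rwa [integrableOn_Icc_iff_integrableOn_Ioc]
    have hΦc : ContinuousOn (fun z => ∫ y in Ioc α z, K y) (Icc α t₁) :=
      intervalIntegral.continuousOn_primitive hKIcc
    have hcwτ : Tendsto (fun z => ∫ y in Ioc α z, K y) (𝓝[Ioc (sSup Z) t₁] (sSup Z))
        (𝓝 (∫ y in Ioc α (sSup Z), K y)) :=
      (hΦc (sSup Z) hτmem).mono_left
        (nhdsWithin_mono _ fun z hz => ⟨hτmem.1.trans hz.1.le, hz.2⟩)
    have hev : ∀ᶠ z in 𝓝[Ioc (sSup Z) t₁] (sSup Z),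
        (∫ y in Ioc α z, K y) < (∫ y in Ioc α (sSup Z), K y) + 1/2 :=
      hcwτ.eventually_lt_const (by linarith)
    have hneτ : (𝓝[Ioc (sSup Z) t₁] (sSup Z)).NeBot := by
      rw [nhdsWithin_Ioc_eq_nhdsGT hτlt]; infer_instance
    obtain ⟨t₂, hΦt₂, ht₂⟩ := (hev.and (eventually_mem_nhdsWithin)).exists
    have hKsplit : ∫ y in Ioc α t₂, K y
        = (∫ y in Ioc α (sSup Z), K y) + ∫ y in Ioc (sSup Z) t₂, K y := by
      rw [← setIntegral_union (Ioc_disjoint_Ioc_of_le le_rfl) measurableSet_Ioc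
        (hKint.mono_set (Ioc_subset_Ioc_right hτmem.2))
        (hKint.mono_set (Ioc_subset_Ioc hτmem.1 ht₂.2)),
        Ioc_union_Ioc_eq_Ioc hτmem.1 ht₂.1.le]
    have hhalf : ∫ y in Ioc (sSup Z) t₂, K y ≤ 1/2 := by linarith
    obtain ⟨xs, hxsmem, hxsmax⟩ := isCompact_Icc.exists_isMaxOn
      (nonempty_Icc.2 ht₂.1.le) (hgc.mono (Icc_subset_Icc hτmem.1 ht₂.2))
    have hM : ∀ y ∈ Icc (sSup Z) t₂, g y ≤ g xs := hxsmax
    have hMnn : 0 ≤ g xs := hgnn xs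
    have hxsIcc : xs ∈ Icc α t₁ := ⟨hτmem.1.trans hxsmem.1, hxsmem.2.trans ht₂.2⟩
    have hKg2 : IntegrableOn (fun y => K y * g y) (Ioc (sSup Z) xs) :=
      hKgint.mono_set (Ioc_subset_Ioc hτmem.1 hxsIcc.2)
    have hKg0 : ∫ y in Ioc α xs, K y * g y = ∫ y in Ioc (sSup Z) xs, K y * g y := by
      rw [← Ioc_union_Ioc_eq_Ioc hτmem.1 hxsmem.1,
        setIntegral_union (Ioc_disjoint_Ioc_of_le le_rfl) measurableSet_Ioc
          (hKgint.mono_set (Ioc_subset_Ioc_right hτmem.2)) hKg2]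
      have hzero : ∫ y in Ioc α (sSup Z), K y * g y = 0 := by
        rw [setIntegral_congr_fun measurableSet_Ioc
          (g := fun _ => (0:ℝ)) fun y hy => by rw [hτZ y ⟨hy.1.le, hy.2⟩, mul_zero]]
        simp
      rw [hzero, zero_add]
    have hchain : g xs ≤ (1/2) * g xs := by
      have c1 : g xs ≤ ∫ y in Ioc α xs, K y * g y := hbound xs hxsIcc
      have c2 : (∫ y in Ioc (sSup Z) xs, K y * g y) ≤ ∫ y in Ioc (sSup Z) xs, K y * g xs := by
        refine setIntegral_mono_on hKg2
          ((hKint.mono_set (Ioc_subset_Ioc hτmem.1 hxsIcc.2)).mul_const _)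
          measurableSet_Ioc fun y hy => ?_
        exact mul_le_mul_of_nonneg_left (hM y ⟨hy.1.le, hy.2.trans hxsmem.2⟩) (hKnn y)
      have c3 : (∫ y in Ioc (sSup Z) xs, K y * g xs)
          = (∫ y in Ioc (sSup Z) xs, K y) * g xs := integral_mul_const _ _
      have c4 : (∫ y in Ioc (sSup Z) xs, K y) ≤ ∫ y in Ioc (sSup Z) t₂, K y := by
        refine setIntegral_mono_set (hKint.mono_set (Ioc_subset_Ioc hτmem.1 ht₂.2))
          (Eventually.of_forall fun y => hKnn y) ?_
        exact HasSubset.Subset.eventuallyLE (Ioc_subset_Ioc_right hxsmem.2)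
      have c5 : (∫ y in Ioc (sSup Z) xs, K y) * g xs ≤ (1/2) * g xs := by
        apply mul_le_mul_of_nonneg_right _ hMnn
        linarith
      have c1' : g xs ≤ ∫ y in Ioc (sSup Z) xs, K y * g y := by rw [← hKg0]; exact c1
      exact le_trans c1' (le_trans c2 (le_trans (le_of_eq c3) c5))
    have hMzero : g xs = 0 := by linarith
    have ht₂Z : t₂ ∈ Z := by
      refine ⟨⟨hτmem.1.trans ht₂.1.le, ht₂.2⟩, fun x hx => ?_⟩
      rcases le_or_gt x (sSup Z) with hxle | hxgt
      · exact hτZ x ⟨hx.1, hxle⟩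
      · have := hM x ⟨hxgt.le, hx.2⟩
        have := hgnn x
        linarith [hMzero]
    have := le_csSup hZbdd ht₂Z
    linarith [ht₂.1]
  intro x hx
  have hgx : g x = 0 := hτZ x (by rw [hτt₁]; exact hx)
  constructor
  · have h1 : ‖w x‖ = 0 := le_antisymm (by
      have := hgnn x
      have h2 := norm_nonneg (w₁ x)
      have h3 : ‖w x‖ + ‖w₁ x‖ = 0 := by simpa [hgdef] using hgx
      linarith) (norm_nonneg _)
    exact norm_eq_zero.1 h1
  · have h1 : ‖w₁ x‖ = 0 := le_antisymm (by
      have h2 := norm_nonneg (w x)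
      have h3 : ‖w x‖ + ‖w₁ x‖ = 0 := by simpa [hgdef] using hgx
      linarith) (norm_nonneg _)
    exact norm_eq_zero.1 h1
lemma qmul_intervalIntegrable {α β : ℝ} {q : ℝ → ℝ} (hq : IntegrableOn q (Ioc α β)) (lam : ℂ)
    {u : ℝ → ℂ} (hu : ContinuousOn u (Ioo α β)) {s t : ℝ} (hs : s ∈ Ioo α β) (ht : t ∈ Ioo α β) :
    IntervalIntegrable (fun x => ((q x : ℂ) - lam) * u x) volume s t := by
  have key : ∀ s t : ℝ, s ∈ Ioo α β → t ∈ Ioo α β → s ≤ t →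
      IntervalIntegrable (fun x => ((q x : ℂ) - lam) * u x) volume s t := by
    intro s t hs ht hst
    rw [intervalIntegrable_iff_integrableOn_Ioc_of_le hst]
    exact qmul_integrableOn (hq.mono_set (Ioc_subset_Ioc hs.1.le ht.2.le)) lam
      (hu.mono (Icc_subset_Ioo hs.1 ht.2))
  rcases le_total s t with h | h
  · exact key s t hs ht h
  · exact (key t s ht hs h).symm

lemma exists_piece (m : ℕ) (d : ℕ → ℝ) (hm : 1 ≤ m) {x : ℝ} (hx0 : d 0 ≤ x) (hxm : x < d m) :
    ∃ j < m, d j ≤ x ∧ x < d (j + 1) := by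
  classical
  have hex : ∃ j, x < d (j + 1) := ⟨m - 1, by rwa [Nat.sub_add_cancel hm]⟩
  have hjlt : x < d (Nat.find hex + 1) := Nat.find_spec hex
  have hjm : Nat.find hex < m := by
    by_contra hge
    have h1 : m - 1 < Nat.find hex := by omega
    exact Nat.find_min hex h1 (by rwa [Nat.sub_add_cancel hm])
  have hdj : d (Nat.find hex) ≤ x := by
    rcases Nat.eq_zero_or_pos (Nat.find hex) with h0 | hpos
    · rw [h0]; exact hx0
    · have h1 := Nat.find_min hex (show Nat.find hex - 1 < Nat.find hex by omega)
      have h2 : Nat.find hex - 1 + 1 = Nat.find hex := by omega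
      rw [h2] at h1
      exact not_lt.1 h1
  exact ⟨Nat.find hex, hjm, hdj, hjlt⟩

lemma d_mono {m : ℕ} {d : ℕ → ℝ} (hdmono : ∀ i < m, d i < d (i + 1)) :
    ∀ i j, i ≤ j → j ≤ m → d i ≤ d j := by
  intro i j hij hjm
  induction j with
  | zero =>
    have : i = 0 := Nat.le_zero.1 hij
    rw [this]
  | succ k ih =>
    rcases eq_or_lt_of_le hij with heq | hlt
    · rw [heq]
    · have hik : i ≤ k := Nat.lt_succ_iff.1 hlt
      exact le_trans (ih hik (le_trans (Nat.le_succ k) hjm))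
        (le_of_lt (hdmono k (Nat.lt_of_succ_le hjm)))

lemma im_helper {p q u v z : ℂ} {r : ℝ}
    (hE : (p * conj q - q * conj p) - (u * conj v - v * conj u) = (z - conj z) * (r : ℂ)) :
    (p * conj q).im - (u * conj v).im = z.im * r := by
  have h1 : q * conj p = conj (p * conj q) := by rw [map_mul, Complex.conj_conj, mul_comm]
  have h2 : v * conj u = conj (u * conj v) := by rw [map_mul, Complex.conj_conj, mul_comm]
  rw [h1, h2, Complex.sub_conj, Complex.sub_conj, Complex.sub_conj] at hE
  have him := congrArg Complex.im hE
  simp at him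
  simp only [Complex.mul_im, Complex.conj_re, Complex.conj_im]
  linarith

lemma im_trans {a b c : ℝ} {p q : ℂ} :
    (((a : ℂ) * p) * conj ((b : ℂ) * q + (c : ℂ) * p)).im = (a * b) * (p * conj q).im := by
  have h1 : ((a : ℂ) * p) * conj ((b : ℂ) * q + (c : ℂ) * p)
      = ((a * b : ℝ) : ℂ) * (p * conj q) + ((a * c : ℝ) : ℂ) * (p * conj p) := by
    rw [map_add, map_mul, map_mul, Complex.conj_ofReal, Complex.conj_ofReal]
    push_cast
    ring
  rw [h1, Complex.add_im, Complex.mul_conj, ← Complex.ofReal_mul]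
  simp only [Complex.mul_im, Complex.ofReal_re, Complex.ofReal_im]
  ring

lemma im_bc {h : ℝ} {p q : ℂ} (hbc : q + (h : ℂ) * p = 0) : (p * conj q).im = 0 := by
  have hq : q = -((h : ℂ) * p) := by linear_combination hbc
  have h1 : p * conj q = ((-h : ℝ) : ℂ) * (p * conj p) := by
    rw [hq, map_neg, map_mul, Complex.conj_ofReal]
    push_cast
    ring
  rw [h1, Complex.mul_conj, ← Complex.ofReal_mul]
  simp

lemma pos_of_ne {α β x₀ : ℝ} (hαβ : α < β) {y : ℝ → ℂ}
    (hint : IntegrableOn (fun x => ‖y x‖ ^ 2) (Ioc α β))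
    (hx₀ : α ≤ x₀) (hx₀' : x₀ < β)
    (hc : ContinuousWithinAt y (Ici x₀) x₀) (hy₀ : y x₀ ≠ 0) :
    0 < ∫ x in Ioc α β, ‖y x‖ ^ 2 := by
  have hp : 0 < ‖y x₀‖ ^ 2 := pow_pos (norm_pos_iff.2 hy₀) 2
  have hcont : ContinuousWithinAt (fun x => ‖y x‖ ^ 2) (Ici x₀) x₀ := (hc.norm).pow 2
  have hev : ∀ᶠ z in 𝓝[Ici x₀] x₀, ‖y x₀‖ ^ 2 / 2 < ‖y z‖ ^ 2 :=
    hcont.eventually_const_lt (by linarith)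
  obtain ⟨ε, hε, hball⟩ := Metric.mem_nhdsWithin_iff.1 hev
  set t₂ := min (x₀ + ε / 2) ((x₀ + β) / 2) with ht₂def
  have hx₀t₂ : x₀ < t₂ := lt_min (by linarith) (by linarith)
  have ht₂β : t₂ ≤ β := le_trans (min_le_right _ _) (by linarith)
  have hsub2 : Ioc x₀ t₂ ⊆ Ioc α β := Ioc_subset_Ioc hx₀ ht₂β
  have hlow : ∀ z ∈ Ioc x₀ t₂, ‖y x₀‖ ^ 2 / 2 ≤ ‖y z‖ ^ 2 := by
    intro z hz
    refine le_of_lt (hball ⟨?_, hz.1.le⟩)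
    rw [Metric.mem_ball, Real.dist_eq, abs_of_nonneg (by linarith [hz.1.le])]
    have : z ≤ x₀ + ε / 2 := hz.2.trans (min_le_left _ _)
    linarith
  have hmeas : volume (Ioc x₀ t₂) ≠ ⊤ := (measure_Ioc_lt_top).ne
  have h1 : (‖y x₀‖ ^ 2 / 2) * (volume (Ioc x₀ t₂)).toReal ≤ ∫ x in Ioc x₀ t₂, ‖y x‖ ^ 2 :=
    setIntegral_ge_of_const_le_real measurableSet_Ioc hmeas hlow (hint.mono_set hsub2)
  have h2 : 0 < (volume (Ioc x₀ t₂)).toReal := by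
    rw [Real.volume_Ioc, ENNReal.toReal_ofReal (by linarith)]
    linarith
  have h3 : (∫ x in Ioc x₀ t₂, ‖y x‖ ^ 2) ≤ ∫ x in Ioc α β, ‖y x‖ ^ 2 :=
    setIntegral_mono_set hint (Eventually.of_forall fun x => by positivity)
      (HasSubset.Subset.eventuallyLE hsub2)
  nlinarith

lemma pos_of_ne_left {α β : ℝ} (hαβ : α < β) {y : ℝ → ℂ}
    (hint : IntegrableOn (fun x => ‖y x‖ ^ 2) (Ioc α β))
    (hc : ContinuousWithinAt y (Iic β) β) (hy₀ : y β ≠ 0) :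
    0 < ∫ x in Ioc α β, ‖y x‖ ^ 2 := by
  have hp : 0 < ‖y β‖ ^ 2 := pow_pos (norm_pos_iff.2 hy₀) 2
  have hcont : ContinuousWithinAt (fun x => ‖y x‖ ^ 2) (Iic β) β := (hc.norm).pow 2
  have hev : ∀ᶠ z in 𝓝[Iic β] β, ‖y β‖ ^ 2 / 2 < ‖y z‖ ^ 2 :=
    hcont.eventually_const_lt (by linarith)
  obtain ⟨ε, hε, hball⟩ := Metric.mem_nhdsWithin_iff.1 hev
  set t₂ := max (β - ε / 2) ((α + β) / 2) with ht₂def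
  have ht₂β : t₂ < β := max_lt (by linarith) (by linarith)
  have hαt₂ : α ≤ t₂ := le_trans (by linarith) (le_max_right _ _)
  have hsub2 : Ioc t₂ β ⊆ Ioc α β := Ioc_subset_Ioc hαt₂ le_rfl
  have hlow : ∀ z ∈ Ioc t₂ β, ‖y β‖ ^ 2 / 2 ≤ ‖y z‖ ^ 2 := by
    intro z hz
    refine le_of_lt (hball ⟨?_, hz.2⟩)
    rw [Metric.mem_ball, Real.dist_eq, abs_of_nonpos (by linarith [hz.2])]
    have : β - ε / 2 ≤ t₂ := le_max_left _ _
    linarith [hz.1]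
  have hmeas : volume (Ioc t₂ β) ≠ ⊤ := (measure_Ioc_lt_top).ne
  have h1 : (‖y β‖ ^ 2 / 2) * (volume (Ioc t₂ β)).toReal ≤ ∫ x in Ioc t₂ β, ‖y x‖ ^ 2 :=
    setIntegral_ge_of_const_le_real measurableSet_Ioc hmeas hlow (hint.mono_set hsub2)
  have h2 : 0 < (volume (Ioc t₂ β)).toReal := by
    rw [Real.volume_Ioc, ENNReal.toReal_ofReal (by linarith)]
    linarith
  have h3 : (∫ x in Ioc t₂ β, ‖y x‖ ^ 2) ≤ ∫ x in Ioc α β, ‖y x‖ ^ 2 :=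
    setIntegral_mono_set hint (Eventually.of_forall fun x => by positivity)
      (HasSubset.Subset.eventuallyLE hsub2)
  nlinarith
lemma IsTransSol.sub_const_mul {m : ℕ} {d a b c : ℕ → ℝ} {q : ℝ → ℝ} {lam : ℂ}
    {u u' v v' : ℝ → ℂ} (hq : ∀ j < m, IntegrableOn q (Ioc (d j) (d (j + 1))))
    (hu : IsTransSol m d a b c q lam u u') (hv : IsTransSol m d a b c q lam v v') (cst : ℂ) :
    IsTransSol m d a b c q lam (fun x => v x - cst * u x) (fun x => v' x - cst * u' x) := by
  obtain ⟨hu1, hu2, hu3, hu4, hu5⟩ := hu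
  obtain ⟨hv1, hv2, hv3, hv4, hv5⟩ := hv
  refine ⟨?_, ?_, ?_, ?_, ?_⟩
  · intro j hj x hx
    exact (hv1 j hj x hx).sub ((hu1 j hj x hx).const_mul cst)
  · intro j hj s hs t ht
    have hucont : ContinuousOn u (Ioo (d j) (d (j + 1))) := fun z hz =>
      ((hu1 j hj z hz).continuousAt).continuousWithinAt
    have hvcont : ContinuousOn v (Ioo (d j) (d (j + 1))) := fun z hz =>
      ((hv1 j hj z hz).continuousAt).continuousWithinAt
    have hiu : IntervalIntegrable (fun x => ((q x : ℂ) - lam) * u x) volume s t :=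
      qmul_intervalIntegrable (hq j hj) lam hucont hs ht
    have hiv : IntervalIntegrable (fun x => ((q x : ℂ) - lam) * v x) volume s t :=
      qmul_intervalIntegrable (hq j hj) lam hvcont hs ht
    have e1 := hv2 j hj s hs t ht
    have e2 := hu2 j hj s hs t ht
    have e3 : (∫ x in s..t, ((q x : ℂ) - lam) * (v x - cst * u x))
        = (∫ x in s..t, ((q x : ℂ) - lam) * v x)
          - cst * ∫ x in s..t, ((q x : ℂ) - lam) * u x := by
      rw [← intervalIntegral.integral_const_mul, ← intervalIntegral.integral_sub hiv
        (hiu.const_mul cst)]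
      refine intervalIntegral.integral_congr fun x _ => by ring
    rw [e3, ← e1, ← e2]
    ring
  · intro j hj
    exact ⟨(hv3 j hj).1.sub (continuousWithinAt_const.mul (hu3 j hj).1),
      (hv3 j hj).2.sub (continuousWithinAt_const.mul (hu3 j hj).2)⟩
  · exact ⟨hv4.1.sub (continuousWithinAt_const.mul hu4.1),
      hv4.2.sub (continuousWithinAt_const.mul hu4.2)⟩
  · intro i h1i him
    obtain ⟨ylu, ylu', hu1', hu2', hu3', hu4'⟩ := hu5 i h1i him
    obtain ⟨ylv, ylv', hv1', hv2', hv3', hv4'⟩ := hv5 i h1i him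
    refine ⟨ylv - cst * ylu, ylv' - cst * ylu', hv1'.sub (tendsto_const_nhds.mul hu1'),
      hv2'.sub (tendsto_const_nhds.mul hu2'), ?_, ?_⟩
    · show v (d i) - cst * u (d i) = _
      rw [hv3', hu3']; ring
    · show v' (d i) - cst * u' (d i) = _
      rw [hv4', hu4']; ring

lemma vanish_global {m : ℕ} {d a b c : ℕ → ℝ} {q : ℝ → ℝ} {lam : ℂ} {w w₁ : ℝ → ℂ}
    (hdmono : ∀ i < m, d i < d (i + 1))
    (hq : ∀ j < m, IntegrableOn q (Ioc (d j) (d (j + 1))))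
    (hsol : IsTransSol m d a b c q lam w w₁)
    (h0 : w (d 0) = 0) (h0' : w₁ (d 0) = 0) :
    ∀ x ∈ Icc (d 0) (d m), w x = 0 := by
  obtain ⟨h1, h2, h3, h4, h5⟩ := hsol
  have key : ∀ j, j ≤ m → (w (d j) = 0 ∧ w₁ (d j) = 0) ∧ ∀ x ∈ Ico (d 0) (d j), w x = 0 := by
    intro j
    induction j with
    | zero =>
      intro _
      exact ⟨⟨h0, h0'⟩, fun x hx => absurd hx (by simp)⟩
    | succ k ih =>
      intro hkm
      have hk : k < m := hkm
      have ihk := ih (le_of_lt hk)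
      have hvan := vanish (hdmono k hk) (hq k hk) (h1 k hk) (h2 k hk) (h3 k hk).1 (h3 k hk).2
        ihk.1.1 ihk.1.2
      have hWlim : Tendsto w (𝓝[<] d (k + 1)) (𝓝 0) := by
        refine Tendsto.congr' ?_ (tendsto_const_nhds (x := (0 : ℂ)))
        refine eventuallyEq_of_mem (Ioo_mem_nhdsLT (hdmono k hk)) fun z hz => ?_
        exact ((hvan z ⟨hz.1.le, hz.2⟩).1).symm
      have hW₁lim : Tendsto w₁ (𝓝[<] d (k + 1)) (𝓝 0) := by
        refine Tendsto.congr' ?_ (tendsto_const_nhds (x := (0 : ℂ)))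
        refine eventuallyEq_of_mem (Ioo_mem_nhdsLT (hdmono k hk)) fun z hz => ?_
        exact ((hvan z ⟨hz.1.le, hz.2⟩).2).symm
      have hend : w (d (k + 1)) = 0 ∧ w₁ (d (k + 1)) = 0 := by
        rcases eq_or_lt_of_le hkm with heq | hlt
        · have hW : Tendsto w (𝓝[<] d m) (𝓝 (w (d m))) :=
            h4.1.mono_left (nhdsWithin_mono _ Iio_subset_Iic_self)
          have hW₁ : Tendsto w₁ (𝓝[<] d m) (𝓝 (w₁ (d m))) :=
            h4.2.mono_left (nhdsWithin_mono _ Iio_subset_Iic_self)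
          rw [← heq] at hW hW₁
          exact ⟨tendsto_nhds_unique hW hWlim, tendsto_nhds_unique hW₁ hW₁lim⟩
        · obtain ⟨yl, yl', ht1, ht2, he1, he2⟩ := h5 (k + 1) (Nat.succ_le_succ (Nat.zero_le k)) hlt
          have hyl : yl = 0 := tendsto_nhds_unique ht1 hWlim
          have hyl' : yl' = 0 := tendsto_nhds_unique ht2 hW₁lim
          constructor
          · rw [he1, hyl, mul_zero]
          · rw [he2, hyl, hyl']; ring
      refine ⟨hend, fun x hx => ?_⟩
      rcases lt_or_ge x (d k) with hlt | hge
      · exact ihk.2 x ⟨hx.1, hlt⟩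
      · exact (hvan x ⟨hge, hx.2⟩).1
  intro x hx
  rcases eq_or_lt_of_le hx.2 with heq | hlt
  · rw [heq]; exact (key m le_rfl).1.1
  · exact (key m le_rfl).2 x ⟨hx.1, hlt⟩
/-- Every eigenvalue of the problem `L` is real, and every eigenvalue is
simple: two nonzero transmission solutions at the same `lam` satisfying both boundary
conditions are scalar multiples of each other. -/
theorem eigenvalues_real_and_simple
    (m : ℕ) (d a b c : ℕ → ℝ) (q : ℝ → ℝ) (h H : ℝ)
    (hm : 2 ≤ m)
    (hd0 : d 0 = 0) (hdm : d m = Real.pi)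
    (hdmono : ∀ i < m, d i < d (i + 1))
    (hab : ∀ i, 1 ≤ i → i < m → 0 < a i * b i)
    (hq : MeasureTheory.IntegrableOn q (Set.Ioo 0 Real.pi)) :
    (∀ lam : ℂ, IsEigen m d a b c q h H lam → lam.im = 0) ∧
    (∀ (lam : ℂ) (u u' v v' : ℝ → ℂ),
      IsTransSol m d a b c q lam u u' → IsTransSol m d a b c q lam v v' →
      (∃ x ∈ Set.Icc (0 : ℝ) Real.pi, u x ≠ 0) → (∃ x ∈ Set.Icc (0 : ℝ) Real.pi, v x ≠ 0) →
      u' 0 + (h : ℂ) * u 0 = 0 → u' Real.pi + (H : ℂ) * u Real.pi = 0 →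
      v' 0 + (h : ℂ) * v 0 = 0 → v' Real.pi + (H : ℂ) * v Real.pi = 0 →
      ∃ cst : ℂ, ∀ x ∈ Set.Icc (0 : ℝ) Real.pi, v x = cst * u x) := by
  have hq0 : IntegrableOn q (Ioc (d 0) (d m)) := by
    rw [hd0, hdm, integrableOn_Ioc_iff_integrableOn_Ioo]
    exact hq
  have hq' : ∀ j < m, IntegrableOn q (Ioc (d j) (d (j + 1))) := fun j hj =>
    hq0.mono_set (Ioc_subset_Ioc (d_mono hdmono 0 j (Nat.zero_le j) (le_of_lt hj))
      (d_mono hdmono (j + 1) m (Nat.succ_le_of_lt hj) le_rfl))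
  constructor
  · -- realness
    rintro lam ⟨y, y', hsol, ⟨x₀, hx₀, hy₀⟩, hb0, hbπ⟩
    by_contra hne
    have h1 := hsol.1
    have h2 := hsol.2.1
    have h3 := hsol.2.2.1
    have h4 := hsol.2.2.2.1
    have h5 := hsol.2.2.2.2
    have hlim : ∀ j, j < m → ∃ p : ℂ × ℂ,
        Tendsto y (𝓝[<] d (j + 1)) (𝓝 p.1) ∧ Tendsto y' (𝓝[<] d (j + 1)) (𝓝 p.2) ∧
        (j + 1 < m → y (d (j + 1)) = (a (j + 1) : ℂ) * p.1 ∧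
          y' (d (j + 1)) = (b (j + 1) : ℂ) * p.2 + (c (j + 1) : ℂ) * p.1) ∧
        (j + 1 = m → p.1 = y (d (j + 1)) ∧ p.2 = y' (d (j + 1))) := by
      intro j hj
      rcases eq_or_lt_of_le (Nat.succ_le_of_lt hj) with heq | hlt
      · refine ⟨(y (d (j + 1)), y' (d (j + 1))), ?_, ?_, fun hcon => absurd heq (by omega),
          fun _ => ⟨rfl, rfl⟩⟩
        · have hh := h4.1
          rw [← heq] at hh
          exact hh.mono_left (nhdsWithin_mono _ Iio_subset_Iic_self)
        · have hh := h4.2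
          rw [← heq] at hh
          exact hh.mono_left (nhdsWithin_mono _ Iio_subset_Iic_self)
      · obtain ⟨yl, yl', ht1, ht2, he1, he2⟩ := h5 (j + 1) (Nat.succ_le_succ (Nat.zero_le j)) hlt
        exact ⟨(yl, yl'), ht1, ht2, fun _ => ⟨he1, he2⟩, fun hcon => absurd hcon (by omega)⟩
    choose P hP1 hP2 hP3 hP4 using hlim
    classical
    set Pf : ℕ → ℂ × ℂ := fun j => if hj : j < m then P j hj else 0 with hPfdef
    have hPf1 : ∀ j (hj : j < m), Pf j = P j hj := fun j hj => dif_pos hj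
    set II : ℕ → ℝ := fun j => ∫ x in Ioc (d j) (d (j + 1)), ‖y x‖ ^ 2 with hIIdef
    set ev : ℕ → ℝ := fun j => (y (d j) * conj (y' (d j))).im with hevdef
    set el : ℕ → ℝ := fun k => ((Pf (k - 1)).1 * conj ((Pf (k - 1)).2)).im with heldef
    have hstep : ∀ j, j < m → el (j + 1) - ev j = lam.im * II j := by
      intro j hj
      have hαβ := hdmono j hj
      have hconjd : ∀ x ∈ Ioo (d j) (d (j + 1)),
          HasDerivAt (fun z => conj (y z)) (conj (y' x)) x := by
        intro x hx
        exact (h1 j hj x hx).star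
      have hconjrel : ∀ s ∈ Ioo (d j) (d (j + 1)), ∀ t ∈ Ioo (d j) (d (j + 1)),
          conj (y' t) - conj (y' s)
            = ∫ x in s..t, ((q x : ℂ) - conj lam) * conj (y x) := by
        intro s hs t ht
        have hc := congrArg (starRingEnd ℂ) (h2 j hj s hs t ht)
        rw [map_sub, conj_intervalIntegral] at hc
        rw [hc]
        refine intervalIntegral.integral_congr fun x _ => ?_
        rw [map_mul, map_sub, Complex.conj_ofReal]
      have hPy : Tendsto y (𝓝[<] d (j + 1)) (𝓝 (Pf j).1) := by
        rw [hPf1 j hj]; exact hP1 j hj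
      have hPy' : Tendsto y' (𝓝[<] d (j + 1)) (𝓝 (Pf j).2) := by
        rw [hPf1 j hj]; exact hP2 j hj
      have key := interval_lagrange hαβ (hq' j hj) (h1 j hj) (h2 j hj)
        (h3 j hj).1 (h3 j hj).2 hPy hPy'
        hconjd hconjrel ((h3 j hj).1.star) ((h3 j hj).2.star)
        hPy.star hPy'.star
      have hIconv : (∫ x in Ioc (d j) (d (j + 1)), y x * conj (y x)) = ((II j : ℝ) : ℂ) := by
        have hpt : ∀ x : ℝ, y x * conj (y x) = ((‖y x‖ ^ 2 : ℝ) : ℂ) := fun x => by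
          rw [Complex.mul_conj]
          norm_cast
          rw [Complex.normSq_eq_norm_sq]
        simp_rw [hpt]
        exact integral_ofReal
      rw [hIconv] at key
      have him := im_helper key
      simpa [heldef, hevdef, Nat.add_sub_cancel] using him
    have htrans : ∀ k, 1 ≤ k → k < m → ev k = (a k * b k) * el k := by
      intro k h1k hkm
      have hk1 : k - 1 < m := by omega
      have hidx : k - 1 + 1 = k := by omega
      have hh := hP3 (k - 1) hk1
      rw [hidx] at hh
      obtain ⟨he1, he2⟩ := hh hkm
      show (y (d k) * conj (y' (d k))).im = _
      rw [he1, he2, ← hPf1 (k - 1) hk1]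
      exact im_trans
    have hev0 : ev 0 = 0 := by
      have hbc : y' (d 0) + (h : ℂ) * y (d 0) = 0 := by rw [hd0]; exact hb0
      exact im_bc hbc
    have helm : el m = 0 := by
      have hm1 : m - 1 < m := by omega
      have hidx : m - 1 + 1 = m := by omega
      have hh := hP4 (m - 1) hm1
      rw [hidx] at hh
      obtain ⟨he1, he2⟩ := hh rfl
      show ((Pf (m - 1)).1 * conj ((Pf (m - 1)).2)).im = 0
      rw [hPf1 (m - 1) hm1, he1, he2]
      have hbc : y' (d m) + (H : ℂ) * y (d m) = 0 := by rw [hdm]; exact hbπ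
      exact im_bc hbc
    have hIInn : ∀ j, 0 ≤ II j := fun j =>
      setIntegral_nonneg measurableSet_Ioc fun x _ => by positivity
    have hyint : ∀ j, j < m → IntegrableOn (fun x => ‖y x‖ ^ 2) (Ioc (d j) (d (j + 1))) := by
      intro j hj
      have hαβ := hdmono j hj
      have hPy : Tendsto y (𝓝[<] d (j + 1)) (𝓝 (Pf j).1) := by
        rw [hPf1 j hj]; exact hP1 j hj
      have hYc : ContinuousOn (Function.update y (d (j + 1)) (Pf j).1)
          (Icc (d j) (d (j + 1))) :=
        continuousOn_update hαβ (cont_Ico (h1 j hj) (h3 j hj).1) hPy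
      have hint : IntegrableOn (fun x => ‖Function.update y (d (j + 1)) (Pf j).1 x‖ ^ 2)
          (Icc (d j) (d (j + 1))) := ((hYc.norm).pow 2).integrableOn_Icc
      refine (hint.mono_set Ioc_subset_Icc_self).congr ?_
      refine (restrict_ae_ne (d (j + 1))).mono fun x hx => ?_
      simp only
      rw [Function.update_of_ne hx]
    have hII0 : ∃ j₀, j₀ < m ∧ 0 < II j₀ := by
      rcases eq_or_lt_of_le hx₀.2 with heq | hltπ
      · have hm1 : m - 1 < m := by omega
        have hidx : m - 1 + 1 = m := by omega
        refine ⟨m - 1, hm1, ?_⟩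
        show 0 < ∫ x in Ioc (d (m - 1)) (d (m - 1 + 1)), ‖y x‖ ^ 2
        rw [hidx]
        have hαβ : d (m - 1) < d m := by
          have := hdmono (m - 1) hm1
          rwa [hidx] at this
        have hint' : IntegrableOn (fun x => ‖y x‖ ^ 2) (Ioc (d (m - 1)) (d m)) := by
          have := hyint (m - 1) hm1; rwa [hidx] at this
        have hyne : y (d m) ≠ 0 := by rw [hdm, ← heq]; exact hy₀
        exact pos_of_ne_left hαβ hint' h4.1 hyne
      · obtain ⟨j, hj, hdj, hdj1⟩ := exists_piece m d (by omega)
          (show d 0 ≤ x₀ by rw [hd0]; exact hx₀.1) (show x₀ < d m by rwa [hdm])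
        refine ⟨j, hj, ?_⟩
        have hc : ContinuousWithinAt y (Ici x₀) x₀ := by
          rcases eq_or_lt_of_le hdj with heq2 | hlt2
          · exact heq2 ▸ (h3 j hj).1
          · exact ((h1 j hj x₀ ⟨hlt2, hdj1⟩).continuousAt).continuousWithinAt
        exact pos_of_ne (hdmono j hj) (hyint j hj) hdj hdj1 hc hy₀
    obtain ⟨j₀, hj₀m, hj₀pos⟩ := hII0
    have ht2 : 0 < lam.im * lam.im := mul_self_pos.2 hne
    have hA : ∀ k, 1 ≤ k → k ≤ m → 0 ≤ lam.im * el k := by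
      intro k hk1 hkm
      induction k with
      | zero => omega
      | succ n ihn =>
        have hnm : n < m := by omega
        have e := hstep n hnm
        rcases Nat.eq_zero_or_pos n with rfl | hn1
        · have heq : lam.im * el 1 = lam.im * lam.im * II 0 := by
            have : el 1 = ev 0 + lam.im * II 0 := by linarith
            rw [this, hev0]; ring
          rw [heq]
          exact mul_nonneg ht2.le (hIInn 0)
        · have ihn' := ihn hn1 (by omega)
          have etr := htrans n hn1 hnm
          have heq : lam.im * el (n + 1)
              = (a n * b n) * (lam.im * el n) + (lam.im * lam.im) * II n := by
            linear_combination lam.im * e + lam.im * etr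
          rw [heq]
          have h1' := mul_nonneg (le_of_lt (hab n hn1 hnm)) ihn'
          have h2' := mul_nonneg ht2.le (hIInn n)
          linarith
    have hApos : ∀ k, j₀ + 1 ≤ k → k ≤ m → 0 < lam.im * el k := by
      intro k hk
      induction k, hk using Nat.le_induction with
      | base =>
        intro hkm
        have e := hstep j₀ hj₀m
        have hpos := mul_pos ht2 hj₀pos
        rcases Nat.eq_zero_or_pos j₀ with rfl | hj₀1
        · have heq : lam.im * el 1 = lam.im * lam.im * II 0 := by
            have : el 1 = ev 0 + lam.im * II 0 := by linarith
            rw [this, hev0]; ring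
          rw [heq]; exact hpos
        · have etr := htrans j₀ hj₀1 hj₀m
          have heq : lam.im * el (j₀ + 1)
              = (a j₀ * b j₀) * (lam.im * el j₀) + (lam.im * lam.im) * II j₀ := by
            linear_combination lam.im * e + lam.im * etr
          rw [heq]
          have h1' := mul_nonneg (le_of_lt (hab j₀ hj₀1 hj₀m)) (hA j₀ hj₀1 (le_of_lt hj₀m))
          linarith
      | succ n hn ihn =>
        intro hkm
        have hnm : n < m := by omega
        have hn1 : 1 ≤ n := by omega
        have e := hstep n hnm
        have etr := htrans n hn1 hnm
        have heq : lam.im * el (n + 1)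
            = (a n * b n) * (lam.im * el n) + (lam.im * lam.im) * II n := by
          linear_combination lam.im * e + lam.im * etr
        rw [heq]
        have h1' := mul_pos (hab n hn1 hnm) (ihn (by omega))
        have h2' := mul_nonneg ht2.le (hIInn n)
        linarith
    have hfin := hApos m (by omega) le_rfl
    rw [helm, mul_zero] at hfin
    exact lt_irrefl 0 hfin
  · -- simplicity
    intro lam u u' v v' hu hv hune _hvne hu0 huπ hv0 hvπ
    have hu0ne : u 0 ≠ 0 := by
      intro hzero
      have hu'0 : u' 0 = 0 := by
        have := hu0
        rw [hzero, mul_zero, add_zero] at this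
        exact this
      obtain ⟨x₀, hx₀, hx₀ne⟩ := hune
      refine hx₀ne (vanish_global hdmono hq' hu (by rwa [hd0]) (by rwa [hd0]) x₀ ?_)
      rwa [hd0, hdm]
    refine ⟨v 0 / u 0, fun x hx => ?_⟩
    have hw := IsTransSol.sub_const_mul hq' hu hv (v 0 / u 0)
    have hw0 : v 0 - (v 0 / u 0) * u 0 = 0 := by rw [div_mul_cancel₀ _ hu0ne, sub_self]
    have hw'0 : v' 0 - (v 0 / u 0) * u' 0 = 0 := by
      have e1 : u' 0 = -(h : ℂ) * u 0 := by linear_combination hu0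
      have e2 : v' 0 = -(h : ℂ) * v 0 := by linear_combination hv0
      rw [e1, e2]
      field_simp
      ring
    have hvan := vanish_global hdmono hq' hw (by rw [hd0]; exact hw0) (by rw [hd0]; exact hw'0)
    have hx' : x ∈ Icc (d 0) (d m) := by rwa [hd0, hdm]
    have := hvan x hx'
    linear_combination this
end
end

section
/- For any two functions f, g such that f, f', g, g' are absolutely continuous on each subinterval (d_i,d_{i+1}), f and g satisfy the transmission conditions at each d_i, and −f'' + qf, −g'' + qg ∈ L²(0,π), the following Green identity holds: ∫₀^π (−f'' + q f) ḡ w dx + (w(0)/r₁) R₁'(f) conj(R₁(g)) + (w(π)/r₂) R₂'(f) conj(R₂(g)) = ∫₀^π f conj(−g'' + q g) w dx + (w(0)/r₁) R₁(f) conj(R₁'(g)) + (w(π)/r₂) R₂(f) conj(R₂'(g)); that is, the operator A(f, R₁(f), R₂(f)) = (−f''+qf, R₁'(f), R₂'(f)) is symmetric in the Hilbert space H = L²((0,π); w dx) ⊕ ℂ² with inner product ⟨F,G⟩ = ∫₀^π f ḡ w dx + (w(0)/r₁) f₁ ḡ₁ + (w(π)/r₂) f₂ ḡ₂. -/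
open MeasureTheory Set Filter Topology Finset
open scoped Real BigOperators ComplexConjugate

noncomputable section

/-- Membership in the domain conditions (without boundary conditions): `f`, `f'` absolutely
continuous on each subinterval (`f''` the a.e. second derivative, in integrated form), the
transmission conditions hold, and `-f'' + q f ∈ L²(0,π)`. -/
def InDomainTrans (m : ℕ) (d a b c : ℕ → ℝ) (q : ℝ → ℝ) (f f' f'' : ℝ → ℂ) : Prop :=
  (∀ j < m, ∀ x ∈ Set.Ioo (d j) (d (j + 1)), HasDerivAt f (f' x) x) ∧
  (∀ j < m, ∀ s ∈ Set.Ioo (d j) (d (j + 1)), ∀ t ∈ Set.Ioo (d j) (d (j + 1)),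
      f' t - f' s = ∫ x in s..t, f'' x) ∧
  (∀ j < m, ContinuousWithinAt f (Set.Ici (d j)) (d j) ∧
      ContinuousWithinAt f' (Set.Ici (d j)) (d j)) ∧
  (ContinuousWithinAt f (Set.Iic (d m)) (d m) ∧ ContinuousWithinAt f' (Set.Iic (d m)) (d m)) ∧
  (∀ i, 1 ≤ i → i < m → ∃ yl yl' : ℂ,
      Filter.Tendsto f (nhdsWithin (d i) (Set.Iio (d i))) (nhds yl) ∧
      Filter.Tendsto f' (nhdsWithin (d i) (Set.Iio (d i))) (nhds yl') ∧
      f (d i) = (a i : ℂ) * yl ∧ f' (d i) = (b i : ℂ) * yl' + (c i : ℂ) * yl) ∧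
  MemLp (fun x => -f'' x + (q x : ℂ) * f x) 2 (volume.restrict (Set.Ioo 0 Real.pi))

lemma fubini_tri (s t : ℝ) (hst : s ≤ t) (h k : ℝ → ℂ)
    (hh : IntegrableOn h (Ioc s t)) (hk : IntegrableOn k (Ioc s t)) :
    ∫ x in Ioc s t, (∫ y in Ioc s x, h y) * k x
      = ∫ y in Ioc s t, h y * ∫ x in Ioc y t, k x := by
  set μ := volume.restrict (Ioc s t) with hμ
  set F : ℝ → ℝ → ℂ := fun x y => if y ≤ x then h y * k x else 0 with hF
  have hD : MeasurableSet {p : ℝ × ℝ | p.2 ≤ p.1} := measurableSet_le measurable_snd measurable_fst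
  have hFi : Integrable (Function.uncurry F) (μ.prod μ) := by
    have h1 : Integrable (fun z : ℝ × ℝ => k z.1 * h z.2) (μ.prod μ) := hk.mul_prod hh
    have : Function.uncurry F = {p : ℝ × ℝ | p.2 ≤ p.1}.indicator
        (fun z : ℝ × ℝ => k z.1 * h z.2) := by
      ext ⟨x, y⟩
      simp only [Function.uncurry, hF, Set.indicator_apply, Set.mem_setOf_eq]
      split_ifs <;> ring
    rw [this]
    exact h1.indicator hD
  have swap := MeasureTheory.integral_integral_swap hFi
  have lhs : ∫ x, (∫ y, F x y ∂μ) ∂μ = ∫ x in Ioc s t, (∫ y in Ioc s x, h y) * k x := by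
    rw [hμ]
    refine setIntegral_congr_fun measurableSet_Ioc (fun x hx => ?_)
    have : (fun y => F x y) = (Iic x).indicator (fun y => h y * k x) := by
      ext y; simp [hF, Set.indicator_apply]
    rw [this, MeasureTheory.integral_indicator measurableSet_Iic]
    rw [Measure.restrict_restrict measurableSet_Iic]
    have : Iic x ∩ Ioc s t = Ioc s x := by
      ext z; simp only [Set.mem_inter_iff, Set.mem_Iic, Set.mem_Ioc]
      constructor
      · rintro ⟨h1, h2, h3⟩; exact ⟨h2, h1⟩
      · rintro ⟨h1, h2⟩; exact ⟨h2, h1, h2.trans hx.2⟩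
    rw [this, MeasureTheory.integral_mul_const]
  have rhs : ∫ y, (∫ x, F x y ∂μ) ∂μ = ∫ y in Ioc s t, h y * ∫ x in Ioc y t, k x := by
    rw [hμ]
    refine setIntegral_congr_fun measurableSet_Ioc (fun y hy => ?_)
    have : (fun x => F x y) = (Ici y).indicator (fun x => h y * k x) := by
      ext x; simp [hF, Set.indicator_apply]
    rw [this, MeasureTheory.integral_indicator measurableSet_Ici]
    rw [Measure.restrict_restrict measurableSet_Ici]
    have h2 : Ici y ∩ Ioc s t = Icc y t := by
      ext z; simp only [Set.mem_inter_iff, Set.mem_Ici, Set.mem_Ioc, Set.mem_Icc]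
      constructor
      · rintro ⟨h1, _, h3⟩; exact ⟨h1, h3⟩
      · rintro ⟨h1, h2⟩; exact ⟨h1, lt_of_lt_of_le hy.1 h1, h2⟩
    rw [h2, MeasureTheory.integral_Icc_eq_integral_Ioc, MeasureTheory.integral_const_mul]
  rw [← lhs, ← rhs]; exact swap

lemma parts_ac (s t : ℝ) (hst : s ≤ t) (u u' v' v'' : ℝ → ℂ)
    (hu : ∀ x ∈ Icc s t, HasDerivAt u (u' x) x)
    (hu' : ContinuousOn u' (Icc s t))
    (hv' : ContinuousOn v' (Icc s t))
    (hvrep : ∀ x ∈ Icc s t, v' x = v' s + ∫ y in s..x, v'' y)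
    (hv'' : IntervalIntegrable v'' volume s t) :
    ∫ x in s..t, u x * v'' x
      = u t * v' t - u s * v' s - ∫ x in s..t, u' x * v' x := by
  have hIcc : uIcc s t = Icc s t := uIcc_of_le hst
  have hu'i : IntervalIntegrable u' volume s t := by
    apply ContinuousOn.intervalIntegrable; rwa [hIcc]
  have hui : ContinuousOn u (Icc s t) := fun x hx => (hu x hx).continuousAt.continuousWithinAt
  have hFTC : ∀ x ∈ Icc s t, ∫ y in s..x, u' y = u x - u s := by
    intro x hx
    refine intervalIntegral.integral_eq_sub_of_hasDerivAt (fun y hy => ?_) ?_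
    · apply hu; rw [uIcc_of_le hx.1] at hy; exact ⟨hy.1, hy.2.trans hx.2⟩
    · exact hu'i.mono_set (by rw [hIcc, uIcc_of_le hx.1]; exact Icc_subset_Icc le_rfl hx.2)
  have hv''t : ∫ y in s..t, v'' y = v' t - v' s := by
    rw [hvrep t ⟨hst, le_rfl⟩]; ring
  have hv''Ioc : IntegrableOn v'' (Ioc s t) := by
    rwa [intervalIntegrable_iff_integrableOn_Ioc_of_le hst] at hv''
  have hu'Ioc : IntegrableOn u' (Ioc s t) := by
    rw [← intervalIntegrable_iff_integrableOn_Ioc_of_le hst]; exact hu'i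
  have hprimc : ContinuousOn (fun x => ∫ y in s..x, u' y) (Icc s t) := by
    have := intervalIntegral.continuousOn_primitive_interval'
      (a := s) (b₁ := s) (b₂ := t) (μ := volume) hu'i (by rw [hIcc]; exact ⟨le_rfl, hst⟩)
    rwa [hIcc] at this
  have hI1 : IntervalIntegrable (fun x => (∫ y in s..x, u' y) * v'' x) volume s t := by
    apply hv''.continuousOn_mul; rwa [hIcc]
  have step1 : ∫ x in s..t, u x * v'' x
      = u s * (v' t - v' s) + ∫ x in s..t, (∫ y in s..x, u' y) * v'' x := by
    have : ∫ x in s..t, u x * v'' x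
        = ∫ x in s..t, (u s * v'' x + (∫ y in s..x, u' y) * v'' x) := by
      apply intervalIntegral.integral_congr
      intro x hx
      rw [hIcc] at hx
      simp only []
      rw [hFTC x hx]; ring
    rw [this, intervalIntegral.integral_add (hv''.const_mul _) hI1,
      intervalIntegral.integral_const_mul, hv''t]
  have step2 : ∫ x in s..t, (∫ y in s..x, u' y) * v'' x
      = ∫ y in s..t, u' y * (v' t - v' y) := by
    rw [intervalIntegral.integral_of_le hst, intervalIntegral.integral_of_le hst]
    have e1 : ∫ x in Ioc s t, (∫ y in s..x, u' y) * v'' x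
        = ∫ x in Ioc s t, (∫ y in Ioc s x, u' y) * v'' x := by
      refine setIntegral_congr_fun measurableSet_Ioc (fun x hx => ?_)
      rw [intervalIntegral.integral_of_le hx.1.le]
    rw [e1, fubini_tri s t hst u' v'' hu'Ioc hv''Ioc]
    refine setIntegral_congr_fun measurableSet_Ioc (fun y hy => ?_)
    congr 1
    have h1 : ∫ x in Ioc y t, v'' x = ∫ x in y..t, v'' x :=
      (intervalIntegral.integral_of_le hy.2).symm
    rw [h1]
    have h2 : ∫ x in y..t, v'' x = (∫ x in s..t, v'' x) - ∫ x in s..y, v'' x := by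
      rw [intervalIntegral.integral_interval_sub_left hv''
        (hv''.mono_set (by rw [hIcc, uIcc_of_le hy.1.le]; exact Icc_subset_Icc le_rfl hy.2))]
    rw [h2, hv''t, hvrep y ⟨hy.1.le, hy.2⟩]; ring
  have hu'v' : IntervalIntegrable (fun x => u' x * v' x) volume s t := by
    apply ContinuousOn.intervalIntegrable; rw [hIcc]; exact hu'.mul hv'
  have step3 : ∫ y in s..t, u' y * (v' t - v' y)
      = v' t * (u t - u s) - ∫ x in s..t, u' x * v' x := by
    have : ∫ y in s..t, u' y * (v' t - v' y)
        = ∫ y in s..t, (u' y * v' t - u' y * v' y) := by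
      apply intervalIntegral.integral_congr; intro x _; ring
    rw [this, intervalIntegral.integral_sub (hu'i.mul_const _) hu'v',
      intervalIntegral.integral_mul_const]
    have : ∫ y in s..t, u' y = u t - u s := hFTC t ⟨hst, le_rfl⟩
    rw [this]; ring
  rw [step1, step2, step3]; ring

lemma integrable_conj' {α : Type*} [MeasurableSpace α] {μ : Measure α} {f : α → ℂ}
    (hf : Integrable f μ) : Integrable (fun x => conj (f x)) μ := by
  have : Integrable (fun x => (Complex.conjCLE : ℂ ≃L[ℝ] ℂ) (f x)) μ :=
    (Complex.conjCLE : ℂ ≃L[ℝ] ℂ).integrable_comp_iff.mpr hf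
  exact this

lemma intervalIntegral_conj {f : ℝ → ℂ} {s t : ℝ} :
    ∫ x in s..t, conj (f x) = conj (∫ x in s..t, f x) := by
  simp only [intervalIntegral, integral_conj, map_sub]

lemma wronskian_closed (s t : ℝ) (hst : s ≤ t) (f f' f'' g g' g'' : ℝ → ℂ)
    (hfd : ∀ x ∈ Icc s t, HasDerivAt f (f' x) x)
    (hgd : ∀ x ∈ Icc s t, HasDerivAt g (g' x) x)
    (hf' : ContinuousOn f' (Icc s t)) (hg' : ContinuousOn g' (Icc s t))
    (hfrep : ∀ x ∈ Icc s t, f' x = f' s + ∫ y in s..x, f'' y)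
    (hgrep : ∀ x ∈ Icc s t, g' x = g' s + ∫ y in s..x, g'' y)
    (hf'' : IntervalIntegrable f'' volume s t) (hg'' : IntervalIntegrable g'' volume s t) :
    ∫ x in s..t, (f x * conj (g'' x) - f'' x * conj (g x))
      = (f t * conj (g' t) - f' t * conj (g t))
        - (f s * conj (g' s) - f' s * conj (g s)) := by
  have hIcc : uIcc s t = Icc s t := uIcc_of_le hst
  have hgdc : ∀ x ∈ Icc s t, HasDerivAt (fun y => conj (g y)) (conj (g' x)) x :=
    fun x hx => (hgd x hx).star
  have hgc : ContinuousOn (fun y => conj (g y)) (Icc s t) :=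
    continuous_star.comp_continuousOn fun x hx => (hgd x hx).continuousAt.continuousWithinAt
  have hfc : ContinuousOn f (Icc s t) :=
    fun x hx => (hfd x hx).continuousAt.continuousWithinAt
  have hg'c : ContinuousOn (fun y => conj (g' y)) (Icc s t) :=
    continuous_star.comp_continuousOn hg'
  have hg''c : IntervalIntegrable (fun y => conj (g'' y)) volume s t :=
    ⟨integrable_conj' hg''.1, integrable_conj' hg''.2⟩
  have hgrepc : ∀ x ∈ Icc s t, conj (g' x) = conj (g' s) + ∫ y in s..x, conj (g'' y) := by
    intro x hx
    rw [intervalIntegral_conj, ← map_add, ← hgrep x hx]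
  have A := parts_ac s t hst f f' (fun y => conj (g' y)) (fun y => conj (g'' y))
    hfd hf' hg'c hgrepc hg''c
  have B := parts_ac s t hst (fun y => conj (g y)) (fun y => conj (g' y)) f' f''
    hgdc hg'c hf' (fun x hx => by rw [hfrep x hx]) hf''
  have hi1 : IntervalIntegrable (fun x => f x * conj (g'' x)) volume s t := by
    apply hg''c.continuousOn_mul; rwa [hIcc]
  have hi2 : IntervalIntegrable (fun x => f'' x * conj (g x)) volume s t := by
    apply hf''.mul_continuousOn; rwa [hIcc]
  rw [intervalIntegral.integral_sub hi1 hi2]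
  have hcomm : ∫ x in s..t, f'' x * conj (g x) = ∫ x in s..t, conj (g x) * f'' x := by
    apply intervalIntegral.integral_congr; intro x _; ring
  have hcomm2 : ∫ x in s..t, f' x * conj (g' x) = ∫ x in s..t, conj (g' x) * f' x := by
    apply intervalIntegral.integral_congr; intro x _; ring
  rw [A, hcomm, B, hcomm2]; ring

lemma bounded_of_tendsto {p r : ℝ} (hpr : p < r) (φ : ℝ → ℂ) (hc : ContinuousOn φ (Ioo p r))
    {A B : ℂ} (ha : Tendsto φ (𝓝[>] p) (𝓝 A)) (hb : Tendsto φ (𝓝[<] r) (𝓝 B)) :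
    ∃ C, ∀ x ∈ Ioo p r, ‖φ x‖ ≤ C := by
  set F : ℝ → ℂ := Function.update (Function.update φ p A) r B with hF
  have hcont : ContinuousOn F (Icc p r) := by
    rw [hF, continuousOn_update_iff, continuousOn_update_iff, Icc_sdiff_right, Ico_sdiff_left]
    refine ⟨⟨hc, ?_⟩, ?_⟩
    · exact fun _ => ha.mono_left (nhdsWithin_mono _ Ioo_subset_Ioi_self)
    · rintro -
      refine (hb.congr' ?_).mono_left (nhdsWithin_mono _ Ico_subset_Iio_self)
      filter_upwards [Ioo_mem_nhdsLT_of_mem (right_mem_Ioc.2 hpr)] with z hz using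
        (Function.update_of_ne hz.1.ne' _ _).symm
  obtain ⟨C, hC⟩ := isCompact_Icc.exists_bound_of_continuousOn hcont
  refine ⟨C, fun x hx => ?_⟩
  have : F x = φ x := by
    rw [hF, Function.update_of_ne hx.2.ne, Function.update_of_ne hx.1.ne']
  rw [← this]
  exact hC x ⟨hx.1.le, hx.2.le⟩

set_option maxHeartbeats 1000000 in
lemma wronskian_open {p r : ℝ} (hpr : p < r) (f f' f'' g g' g'' : ℝ → ℂ)
    (hfd : ∀ x ∈ Ioo p r, HasDerivAt f (f' x) x)
    (hgd : ∀ x ∈ Ioo p r, HasDerivAt g (g' x) x)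
    (hfrep : ∀ s ∈ Ioo p r, ∀ t ∈ Ioo p r, f' t - f' s = ∫ x in s..t, f'' x)
    (hgrep : ∀ s ∈ Ioo p r, ∀ t ∈ Ioo p r, g' t - g' s = ∫ x in s..t, g'' x)
    (hf2 : IntegrableOn f'' (Ioo p r)) (hg2 : IntegrableOn g'' (Ioo p r))
    {fp fp' gp gp' fr fr' gr gr' : ℂ}
    (hfp : Tendsto f (𝓝[>] p) (𝓝 fp)) (hfp' : Tendsto f' (𝓝[>] p) (𝓝 fp'))
    (hgp : Tendsto g (𝓝[>] p) (𝓝 gp)) (hgp' : Tendsto g' (𝓝[>] p) (𝓝 gp'))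
    (hfr : Tendsto f (𝓝[<] r) (𝓝 fr)) (hfr' : Tendsto f' (𝓝[<] r) (𝓝 fr'))
    (hgr : Tendsto g (𝓝[<] r) (𝓝 gr)) (hgr' : Tendsto g' (𝓝[<] r) (𝓝 gr')) :
    ∫ x in Ioo p r, (f x * conj (g'' x) - f'' x * conj (g x))
      = (fr * conj gr' - fr' * conj gr) - (fp * conj gp' - fp' * conj gp) := by
  set W : ℝ → ℂ := fun x => f x * conj (g' x) - f' x * conj (g x) with hW
  set H : ℝ → ℂ := fun x => f x * conj (g'' x) - f'' x * conj (g x) with hH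
  set c : ℝ := (p + r) / 2 with hc
  have hcm : c ∈ Ioo p r := ⟨by rw [hc]; linarith, by rw [hc]; linarith⟩
  have hfc : ContinuousOn f (Ioo p r) :=
    fun x hx => (hfd x hx).continuousAt.continuousWithinAt
  have hgc : ContinuousOn g (Ioo p r) :=
    fun x hx => (hgd x hx).continuousAt.continuousWithinAt
  -- key identity on closed subintervals
  have key : ∀ s ∈ Ioo p r, ∀ t ∈ Ioo p r, s ≤ t →
      ∫ x in s..t, H x = W t - W s := by
    intro s hs t ht hst
    have hsub : Icc s t ⊆ Ioo p r := fun x hx => ⟨lt_of_lt_of_le hs.1 hx.1, lt_of_le_of_lt hx.2 ht.2⟩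
    have hsubo : Ioc s t ⊆ Ioo p r := fun x hx => ⟨lt_trans hs.1 hx.1, lt_of_le_of_lt hx.2 ht.2⟩
    have hf''i : IntervalIntegrable f'' volume s t := by
      rw [intervalIntegrable_iff_integrableOn_Ioc_of_le hst]; exact hf2.mono_set hsubo
    have hg''i : IntervalIntegrable g'' volume s t := by
      rw [intervalIntegrable_iff_integrableOn_Ioc_of_le hst]; exact hg2.mono_set hsubo
    have hfrep' : ∀ x ∈ Icc s t, f' x = f' s + ∫ y in s..x, f'' y := by
      intro x hx
      have := hfrep s hs x (hsub hx)
      rw [← this]; ring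
    have hgrep' : ∀ x ∈ Icc s t, g' x = g' s + ∫ y in s..x, g'' y := by
      intro x hx
      have := hgrep s hs x (hsub hx)
      rw [← this]; ring
    have hf'c : ContinuousOn f' (Icc s t) := by
      have hprim : ContinuousOn (fun x => f' s + ∫ y in s..x, f'' y) (Icc s t) := by
        apply ContinuousOn.add continuousOn_const
        have := intervalIntegral.continuousOn_primitive_interval' hf''i
          (a := s) (by rw [uIcc_of_le hst]; exact ⟨le_rfl, hst⟩)
        rwa [uIcc_of_le hst] at this
      exact hprim.congr hfrep'
    have hg'c : ContinuousOn g' (Icc s t) := by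
      have hprim : ContinuousOn (fun x => g' s + ∫ y in s..x, g'' y) (Icc s t) := by
        apply ContinuousOn.add continuousOn_const
        have := intervalIntegral.continuousOn_primitive_interval' hg''i
          (a := s) (by rw [uIcc_of_le hst]; exact ⟨le_rfl, hst⟩)
        rwa [uIcc_of_le hst] at this
      exact hprim.congr hgrep'
    exact wronskian_closed s t hst f f' f'' g g' g''
      (fun x hx => hfd x (hsub hx)) (fun x hx => hgd x (hsub hx))
      hf'c hg'c hfrep' hgrep' hf''i hg''i
  -- integrability of H on Ioo p r
  obtain ⟨C1, hC1⟩ := bounded_of_tendsto hpr f hfc hfp hfr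
  obtain ⟨C2, hC2⟩ := bounded_of_tendsto hpr g hgc hgp hgr
  have hfm : AEStronglyMeasurable f (volume.restrict (Ioo p r)) :=
    hfc.aestronglyMeasurable measurableSet_Ioo
  have hgm : AEStronglyMeasurable g (volume.restrict (Ioo p r)) :=
    hgc.aestronglyMeasurable measurableSet_Ioo
  have hHi : IntegrableOn H (Ioo p r) := by
    have h1 : IntegrableOn (fun x => f x * conj (g'' x)) (Ioo p r) := by
      refine Integrable.bdd_mul (c := C1) (integrable_conj' hg2) hfm ?_
      rw [ae_restrict_iff' measurableSet_Ioo]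
      exact ae_of_all _ hC1
    have h2 : IntegrableOn (fun x => f'' x * conj (g x)) (Ioo p r) := by
      have : IntegrableOn (fun x => conj (g x) * f'' x) (Ioo p r) := by
        refine Integrable.bdd_mul (c := C2) hf2 ?_ ?_
        · exact (continuous_star.comp_continuousOn hgc).aestronglyMeasurable measurableSet_Ioo
        · rw [ae_restrict_iff' measurableSet_Ioo]
          refine ae_of_all _ fun x hx => ?_
          simpa using hC2 x hx
      exact this.congr_fun (fun x _ => by ring) measurableSet_Ioo
    exact h1.sub h2
  have hHpc : IntervalIntegrable H volume p c := by
    rw [intervalIntegrable_iff_integrableOn_Ioo_of_le hcm.1.le]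
    exact hHi.mono_set (Ioo_subset_Ioo le_rfl hcm.2.le)
  have hHcr : IntervalIntegrable H volume c r := by
    rw [intervalIntegrable_iff_integrableOn_Ioo_of_le hcm.2.le]
    exact hHi.mono_set (Ioo_subset_Ioo hcm.1.le le_rfl)
  -- limits of W
  have conjT : ∀ {l : Filter ℝ} {φ : ℝ → ℂ} {L : ℂ}, Tendsto φ l (𝓝 L) →
      Tendsto (fun x => conj (φ x)) l (𝓝 (conj L)) :=
    fun h => (Complex.continuous_conj.tendsto _).comp h
  have hWp : Tendsto W (𝓝[>] p) (𝓝 (fp * conj gp' - fp' * conj gp)) :=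
    (hfp.mul (conjT hgp')).sub (hfp'.mul (conjT hgp))
  have hWr : Tendsto W (𝓝[<] r) (𝓝 (fr * conj gr' - fr' * conj gr)) :=
    (hfr.mul (conjT hgr')).sub (hfr'.mul (conjT hgr))
  -- left piece
  have hleft : ∫ x in p..c, H x = W c - (fp * conj gp' - fp' * conj gp) := by
    have hcontP : ContinuousOn (fun x => ∫ t in x..c, H t) (uIcc p c) := by
      apply intervalIntegral.continuousOn_primitive_interval_left
      rw [uIcc_of_le hcm.1.le]
      rw [integrableOn_Icc_iff_integrableOn_Ioo]
      exact hHi.mono_set (Ioo_subset_Ioo le_rfl hcm.2.le)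
    have T1 : Tendsto (fun s => ∫ t in s..c, H t) (𝓝[>] p) (𝓝 (∫ t in p..c, H t)) := by
      have := (hcontP p (by rw [uIcc_of_le hcm.1.le]; exact ⟨le_rfl, hcm.1.le⟩)).tendsto
      refine this.mono_left ?_
      rw [← nhdsWithin_Ioc_eq_nhdsGT hcm.1]
      exact nhdsWithin_mono _ (by rw [uIcc_of_le hcm.1.le]; exact Ioc_subset_Icc_self)
    have T2 : Tendsto (fun s => W c - W s) (𝓝[>] p)
        (𝓝 (W c - (fp * conj gp' - fp' * conj gp))) := tendsto_const_nhds.sub hWp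
    have hev : (fun s => ∫ t in s..c, H t) =ᶠ[𝓝[>] p] fun s => W c - W s := by
      filter_upwards [Ioo_mem_nhdsGT_of_mem (⟨le_rfl, hcm.1⟩ : p ∈ Ico p c)] with s hs
      exact key s ⟨hs.1, hs.2.trans hcm.2⟩ c hcm hs.2.le
    exact tendsto_nhds_unique (T1.congr' hev) T2
  -- right piece
  have hright : ∫ x in c..r, H x = (fr * conj gr' - fr' * conj gr) - W c := by
    have hcontP : ContinuousOn (fun x => ∫ t in c..x, H t) (uIcc c r) := by
      apply intervalIntegral.continuousOn_primitive_interval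
      rw [uIcc_of_le hcm.2.le, integrableOn_Icc_iff_integrableOn_Ioo]
      exact hHi.mono_set (Ioo_subset_Ioo hcm.1.le le_rfl)
    have T1 : Tendsto (fun t => ∫ x in c..t, H x) (𝓝[<] r) (𝓝 (∫ x in c..r, H x)) := by
      have := (hcontP r (by rw [uIcc_of_le hcm.2.le]; exact ⟨hcm.2.le, le_rfl⟩)).tendsto
      refine this.mono_left ?_
      rw [← nhdsWithin_Ico_eq_nhdsLT hcm.2]
      exact nhdsWithin_mono _ (by rw [uIcc_of_le hcm.2.le]; exact Ico_subset_Icc_self)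
    have T2 : Tendsto (fun t => W t - W c) (𝓝[<] r)
        (𝓝 ((fr * conj gr' - fr' * conj gr) - W c)) := hWr.sub tendsto_const_nhds
    have hev : (fun t => ∫ x in c..t, H x) =ᶠ[𝓝[<] r] fun t => W t - W c := by
      filter_upwards [Ioo_mem_nhdsLT_of_mem (⟨hcm.2, le_rfl⟩ : r ∈ Ioc c r)] with t ht
      exact key c hcm t ⟨hcm.1.trans ht.1, ht.2⟩ ht.1.le
    exact tendsto_nhds_unique (T1.congr' hev) T2
  have hsplit : ∫ x in Ioo p r, H x = (∫ x in p..c, H x) + ∫ x in c..r, H x := by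
    rw [intervalIntegral.integral_add_adjacent_intervals hHpc hHcr,
      intervalIntegral.integral_of_le hpr.le, integral_Ioc_eq_integral_Ioo]
  rw [hsplit, hleft, hright]; ring


/-- Green's identity for the eigenparameter-dependent problem: the operator
`A (f, R₁ f, R₂ f) = (-f'' + q f, R₁' f, R₂' f)` is symmetric in
`L²((0,π); w dx) ⊕ ℂ²` with the weights `w(0)/r₁`, `w(π)/r₂` on the boundary components. -/
theorem eigenparameter_operator_symmetric
    (m : ℕ) (d a b c : ℕ → ℝ) (q : ℝ → ℝ) (h1 h2 h3 H1 H2 H3 : ℝ)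
    (hm : 2 ≤ m)
    (hd0 : d 0 = 0) (hdm : d m = Real.pi)
    (hdmono : ∀ i < m, d i < d (i + 1))
    (hab : ∀ i, 1 ≤ i → i < m → 0 < a i * b i)
    (hq : MeasureTheory.IntegrableOn q (Set.Ioo 0 Real.pi))
    (hr1 : 0 < h3 - h1 * h2) (hr2 : 0 < H1 * H2 - H3)
    (f f' f'' g g' g'' : ℝ → ℂ)
    (hf : InDomainTrans m d a b c q f f' f'')
    (hg : InDomainTrans m d a b c q g g' g'') :
    (∫ x in Set.Ioo (0 : ℝ) Real.pi,
        (-f'' x + (q x : ℂ) * f x) * conj (g x) * (wfun m d a b x : ℂ)) +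
      ((wfun m d a b 0 / (h3 - h1 * h2) : ℝ) : ℂ) *
        ((h2 : ℂ) * f' 0 + (h3 : ℂ) * f 0) * conj (g' 0 + (h1 : ℂ) * g 0) +
      ((wfun m d a b Real.pi / (H1 * H2 - H3) : ℝ) : ℂ) *
        ((H2 : ℂ) * f' Real.pi + (H3 : ℂ) * f Real.pi) *
          conj (g' Real.pi + (H1 : ℂ) * g Real.pi) =
    (∫ x in Set.Ioo (0 : ℝ) Real.pi,
        f x * conj (-g'' x + (q x : ℂ) * g x) * (wfun m d a b x : ℂ)) +
      ((wfun m d a b 0 / (h3 - h1 * h2) : ℝ) : ℂ) *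
        (f' 0 + (h1 : ℂ) * f 0) * conj ((h2 : ℂ) * g' 0 + (h3 : ℂ) * g 0) +
      ((wfun m d a b Real.pi / (H1 * H2 - H3) : ℝ) : ℂ) *
        (f' Real.pi + (H1 : ℂ) * f Real.pi) *
          conj ((H2 : ℂ) * g' Real.pi + (H3 : ℂ) * g Real.pi) := by
  classical
  obtain ⟨hfd, hfrep, hfrc, hflc, hftr, hfL2⟩ := hf
  obtain ⟨hgd, hgrep, hgrc, hglc, hgtr, hgL2⟩ := hg
  -- basic ordering facts
  have hdlt : ∀ i j : ℕ, i < j → j ≤ m → d i < d j := by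
    intro i j hij hjm
    induction j with
    | zero => omega
    | succ n ih =>
      rcases Nat.lt_succ_iff_lt_or_eq.1 hij with h | h
      · exact (ih h (by omega)).trans (hdmono n (by omega))
      · subst h; exact hdmono i (by omega)
  have hdle : ∀ i j : ℕ, i ≤ j → j ≤ m → d i ≤ d j := by
    intro i j hij hjm
    rcases eq_or_lt_of_le hij with h | h
    · rw [h]
    · exact (hdlt i j h hjm).le
  have hd0' : ∀ j, j ≤ m → 0 ≤ d j := by
    intro j hj
    rcases Nat.eq_zero_or_pos j with h | h
    · subst h; rw [hd0]
    · rw [← hd0]; exact (hdlt 0 j h hj).le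
  have hdπ : ∀ j, j ≤ m → d j ≤ Real.pi := by
    intro j hj
    rcases eq_or_lt_of_le hj with h | h
    · subst h; rw [hdm]
    · rw [← hdm]; exact (hdlt j m h le_rfl).le
  have hsub : ∀ j, j < m → Set.Ioo (d j) (d (j+1)) ⊆ Set.Ioo 0 Real.pi := by
    intro j hj x hx
    exact ⟨lt_of_le_of_lt (hd0' j hj.le) hx.1, lt_of_lt_of_le hx.2 (hdπ (j+1) hj)⟩
  -- unified left-limit data
  set a' : ℕ → ℝ := fun i => if i = m then 1 else a i with ha'
  set b' : ℕ → ℝ := fun i => if i = m then 1 else b i with hb'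
  set c' : ℕ → ℝ := fun i => if i = m then 0 else c i with hc'
  have hlim : ∀ (y y' : ℝ → ℂ),
      (ContinuousWithinAt y (Set.Iic (d m)) (d m) ∧
        ContinuousWithinAt y' (Set.Iic (d m)) (d m)) →
      (∀ i, 1 ≤ i → i < m → ∃ yl yl' : ℂ,
        Tendsto y (𝓝[<] d i) (𝓝 yl) ∧ Tendsto y' (𝓝[<] d i) (𝓝 yl') ∧
        y (d i) = (a i : ℂ) * yl ∧ y' (d i) = (b i : ℂ) * yl' + (c i : ℂ) * yl) →
      ∀ j : ℕ, ∃ yl yl' : ℂ, 1 ≤ j → j ≤ m →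
      Tendsto y (𝓝[<] d j) (𝓝 yl) ∧ Tendsto y' (𝓝[<] d j) (𝓝 yl') ∧
      y (d j) = (a' j : ℂ) * yl ∧ y' (d j) = (b' j : ℂ) * yl' + (c' j : ℂ) * yl := by
    intro y y' hylc hytr j
    by_cases hjm : j = m
    · refine ⟨y (d j), y' (d j), fun _ _ => ⟨?_, ?_, ?_, ?_⟩⟩
      · rw [hjm]; exact hylc.1.tendsto.mono_left (nhdsWithin_mono _ Iio_subset_Iic_self)
      · rw [hjm]; exact hylc.2.tendsto.mono_left (nhdsWithin_mono _ Iio_subset_Iic_self)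
      · simp [ha', hjm]
      · simp [hb', hc', hjm]
    · by_cases hj1 : 1 ≤ j ∧ j < m
      · obtain ⟨yl, yl', hT, hT', hv, hv'⟩ := hytr j hj1.1 hj1.2
        refine ⟨yl, yl', fun _ _ => ⟨hT, hT', ?_, ?_⟩⟩
        · simpa [ha', hjm] using hv
        · simpa [hb', hc', hjm] using hv'
      · exact ⟨0, 0, fun hx1 hx2 => absurd ⟨hx1, lt_of_le_of_ne hx2 hjm⟩ hj1⟩
  choose FL FL' hFL using hlim f f' hflc hftr
  choose Gl Gl' hGl using hlim g g' hglc hgtr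
  -- right-limits equal values
  have hfrT : ∀ j, j < m → Tendsto f (𝓝[>] d j) (𝓝 (f (d j))) :=
    fun j hj => (hfrc j hj).1.tendsto.mono_left (nhdsWithin_mono _ Ioi_subset_Ici_self)
  have hfrT' : ∀ j, j < m → Tendsto f' (𝓝[>] d j) (𝓝 (f' (d j))) :=
    fun j hj => (hfrc j hj).2.tendsto.mono_left (nhdsWithin_mono _ Ioi_subset_Ici_self)
  have hgrT : ∀ j, j < m → Tendsto g (𝓝[>] d j) (𝓝 (g (d j))) :=
    fun j hj => (hgrc j hj).1.tendsto.mono_left (nhdsWithin_mono _ Ioi_subset_Ici_self)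
  have hgrT' : ∀ j, j < m → Tendsto g' (𝓝[>] d j) (𝓝 (g' (d j))) :=
    fun j hj => (hgrc j hj).2.tendsto.mono_left (nhdsWithin_mono _ Ioi_subset_Ici_self)
  -- L² functions are integrable
  haveI : IsFiniteMeasure (volume.restrict (Set.Ioo (0:ℝ) Real.pi)) := by
    constructor
    rw [Measure.restrict_apply_univ, Real.volume_Ioo]
    exact ENNReal.ofReal_lt_top
  have hPf : IntegrableOn (fun x => -f'' x + (q x : ℂ) * f x) (Set.Ioo 0 Real.pi) :=
    hfL2.integrable one_le_two
  have hPg : IntegrableOn (fun x => -g'' x + (q x : ℂ) * g x) (Set.Ioo 0 Real.pi) :=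
    hgL2.integrable one_le_two
  -- boundedness on subintervals
  have hBf : ∀ j, j < m → ∃ C, ∀ x ∈ Set.Ioo (d j) (d (j+1)), ‖f x‖ ≤ C := by
    intro j hj
    exact bounded_of_tendsto (hdmono j hj) f
      (fun x hx => (hfd j hj x hx).continuousAt.continuousWithinAt)
      (hfrT j hj) ((hFL (j+1) (by omega) hj).1)
  have hBg : ∀ j, j < m → ∃ C, ∀ x ∈ Set.Ioo (d j) (d (j+1)), ‖g x‖ ≤ C := by
    intro j hj
    exact bounded_of_tendsto (hdmono j hj) g
      (fun x hx => (hgd j hj x hx).continuousAt.continuousWithinAt)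
      (hgrT j hj) ((hGl (j+1) (by omega) hj).1)
  have hfmj : ∀ j, j < m → AEStronglyMeasurable f (volume.restrict (Set.Ioo (d j) (d (j+1)))) :=
    fun j hj => ContinuousOn.aestronglyMeasurable
      (fun x hx => (hfd j hj x hx).continuousAt.continuousWithinAt) measurableSet_Ioo
  have hgmj : ∀ j, j < m → AEStronglyMeasurable g (volume.restrict (Set.Ioo (d j) (d (j+1)))) :=
    fun j hj => ContinuousOn.aestronglyMeasurable
      (fun x hx => (hgd j hj x hx).continuousAt.continuousWithinAt) measurableSet_Ioo
  -- integrability of second derivatives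
  have hsecond : ∀ (y y' y'' : ℝ → ℂ), (∀ j < m, ∀ x ∈ Set.Ioo (d j) (d (j+1)),
        HasDerivAt y (y' x) x) →
      IntegrableOn (fun x => -y'' x + (q x : ℂ) * y x) (Set.Ioo 0 Real.pi) →
      (∀ j, j < m → ∃ C, ∀ x ∈ Set.Ioo (d j) (d (j+1)), ‖y x‖ ≤ C) →
      ∀ j, j < m → IntegrableOn y'' (Set.Ioo (d j) (d (j+1))) := by
    intro y y' y'' hyd hPy hBy j hj
    obtain ⟨C, hC⟩ := hBy j hj
    have hym : AEStronglyMeasurable y (volume.restrict (Set.Ioo (d j) (d (j+1)))) :=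
      ContinuousOn.aestronglyMeasurable
        (fun x hx => (hyd j hj x hx).continuousAt.continuousWithinAt) measurableSet_Ioo
    have hqi : IntegrableOn (fun x => ((q x : ℝ) : ℂ)) (Set.Ioo (d j) (d (j+1))) :=
      (hq.mono_set (hsub j hj)).ofReal
    have hqy : IntegrableOn (fun x => (q x : ℂ) * y x) (Set.Ioo (d j) (d (j+1))) := by
      have h0 := Integrable.bdd_mul (c := C) hqi hym
        ((ae_restrict_iff' measurableSet_Ioo).2 (ae_of_all _ hC))
      have h2 : (fun x => y x * ((q x : ℝ) : ℂ)) = fun x => (q x : ℂ) * y x :=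
        funext fun x => mul_comm _ _
      rwa [h2] at h0
    have h5 : IntegrableOn (fun x => (q x : ℂ) * y x - (-y'' x + (q x : ℂ) * y x))
        (Set.Ioo (d j) (d (j+1))) := hqy.sub (hPy.mono_set (hsub j hj))
    exact h5.congr_fun (fun x _ => by ring) measurableSet_Ioo
  have hf''i := hsecond f f' f'' hfd hPf hBf
  have hg''i := hsecond g g' g'' hgd hPg hBg
  -- the per-interval Wronskian identity
  set WV : ℕ → ℂ := fun j => f (d j) * conj (g' (d j)) - f' (d j) * conj (g (d j)) with hWV
  set WL : ℕ → ℂ := fun j => FL j * conj (Gl' j) - FL' j * conj (Gl j) with hWL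
  have hIj : ∀ j, j < m →
      ∫ x in Set.Ioo (d j) (d (j+1)), (f x * conj (g'' x) - f'' x * conj (g x))
        = WL (j+1) - WV j := by
    intro j hj
    obtain ⟨hFt, hFt', -, -⟩ := hFL (j+1) (by omega) hj
    obtain ⟨hGt, hGt', -, -⟩ := hGl (j+1) (by omega) hj
    exact wronskian_open (hdmono j hj) f f' f'' g g' g''
      (hfd j hj) (hgd j hj) (hfrep j hj) (hgrep j hj) (hf''i j hj) (hg''i j hj)
      (hfrT j hj) (hfrT' j hj) (hgrT j hj) (hgrT' j hj) hFt hFt' hGt hGt'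
  -- weight function facts
  set u : ℕ → ℝ := fun j => ∏ i ∈ Finset.Icc 1 j, (a i * b i)⁻¹ with hu
  have hwc : ∀ j, j < m → ∀ x ∈ Set.Ioo (d j) (d (j+1)), wfun m d a b x = u j := by
    intro j hj x hx
    have h1 : ∀ i ∈ Finset.Icc 1 (m-1),
        (if d i < x then (a i * b i)⁻¹ else 1) = (if i ≤ j then (a i * b i)⁻¹ else 1) := by
      intro i hi
      simp only [Finset.mem_Icc] at hi
      by_cases hij : i ≤ j
      · have hdi : d i ≤ d j := hdle i j hij hj.le
        rw [if_pos (lt_of_le_of_lt hdi hx.1), if_pos hij]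
      · have hdi : d (j+1) ≤ d i := hdle (j+1) i (not_le.1 hij) (by omega)
        rw [if_neg (not_lt.2 (hx.2.le.trans hdi)), if_neg hij]
    rw [wfun, Finset.prod_congr rfl h1, hu]
    rw [← Finset.prod_subset (Finset.Icc_subset_Icc le_rfl (by omega : j ≤ m - 1))
      (fun i hi hni => ?_)]
    · exact Finset.prod_congr rfl fun i hi => if_pos (Finset.mem_Icc.1 hi).2
    · simp only [Finset.mem_Icc] at hi hni
      exact if_neg (by omega)
  have hw0 : wfun m d a b 0 = 1 := by
    rw [wfun]
    apply Finset.prod_eq_one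
    intro i hi
    simp only [Finset.mem_Icc] at hi
    have : (0:ℝ) < d i := by rw [← hd0]; exact hdlt 0 i (by omega) (by omega)
    rw [if_neg (not_lt.2 this.le)]
  have hwπ : wfun m d a b Real.pi = u (m-1) := by
    rw [wfun, hu]
    apply Finset.prod_congr rfl
    intro i hi
    simp only [Finset.mem_Icc] at hi
    have : d i < Real.pi := by rw [← hdm]; exact hdlt i m (by omega) le_rfl
    rw [if_pos this]
  -- integrability of the full integrands on subintervals
  have hLi : ∀ j, j < m → IntegrableOn
      (fun x => (-f'' x + (q x : ℂ) * f x) * conj (g x) * (wfun m d a b x : ℂ))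
      (Set.Ioo (d j) (d (j+1))) := by
    intro j hj
    obtain ⟨C, hC⟩ := hBg j hj
    have h0 : Integrable (fun x => (conj (g x) * ((u j : ℝ) : ℂ)) * (-f'' x + (q x : ℂ) * f x))
        (volume.restrict (Set.Ioo (d j) (d (j+1)))) := by
      refine Integrable.bdd_mul (c := C * |u j|) (hPf.mono_set (hsub j hj)) ?_ ?_
      · have hgc : ContinuousOn g (Set.Ioo (d j) (d (j+1))) :=
          fun x hx => (hgd j hj x hx).continuousAt.continuousWithinAt
        exact ((continuous_star.comp_continuousOn hgc).mul
          continuousOn_const).aestronglyMeasurable measurableSet_Ioo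
      · rw [ae_restrict_iff' measurableSet_Ioo]
        refine ae_of_all _ fun x hx => ?_
        rw [norm_mul]
        have e1 : ‖(starRingEnd ℂ) (g x)‖ = ‖g x‖ := by simp
        have e2 : ‖((u j : ℝ) : ℂ)‖ = |u j| := by
          simp [Complex.norm_real, Real.norm_eq_abs]
        rw [e1, e2]
        exact mul_le_mul_of_nonneg_right (hC x hx) (abs_nonneg _)
    have h0' : IntegrableOn (fun x => (conj (g x) * ((u j : ℝ) : ℂ)) * (-f'' x + (q x : ℂ) * f x))
        (Set.Ioo (d j) (d (j+1))) := h0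
    exact h0'.congr_fun (fun x hx => by rw [hwc j hj x hx]; ring) measurableSet_Ioo
  have hRi : ∀ j, j < m → IntegrableOn
      (fun x => f x * conj (-g'' x + (q x : ℂ) * g x) * (wfun m d a b x : ℂ))
      (Set.Ioo (d j) (d (j+1))) := by
    intro j hj
    obtain ⟨C, hC⟩ := hBf j hj
    have h0 : Integrable (fun x => (f x * ((u j : ℝ) : ℂ)) * conj (-g'' x + (q x : ℂ) * g x))
        (volume.restrict (Set.Ioo (d j) (d (j+1)))) := by
      refine Integrable.bdd_mul (c := C * |u j|) (integrable_conj' (hPg.mono_set (hsub j hj))) ?_ ?_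
      · have hfc : ContinuousOn f (Set.Ioo (d j) (d (j+1))) :=
          fun x hx => (hfd j hj x hx).continuousAt.continuousWithinAt
        exact (hfc.mul continuousOn_const).aestronglyMeasurable measurableSet_Ioo
      · rw [ae_restrict_iff' measurableSet_Ioo]
        refine ae_of_all _ fun x hx => ?_
        rw [norm_mul]
        have e2 : ‖((u j : ℝ) : ℂ)‖ = |u j| := by
          simp [Complex.norm_real, Real.norm_eq_abs]
        rw [e2]
        exact mul_le_mul_of_nonneg_right (hC x hx) (abs_nonneg _)
    have h0' : IntegrableOn (fun x => (f x * ((u j : ℝ) : ℂ)) * conj (-g'' x + (q x : ℂ) * g x))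
        (Set.Ioo (d j) (d (j+1))) := h0
    exact h0'.congr_fun (fun x hx => by rw [hwc j hj x hx]; ring) measurableSet_Ioo
  -- a.e. decomposition of (0, π)
  have hUsub : (⋃ j ∈ Finset.range m, Set.Ioo (d j) (d (j+1))) ⊆ Set.Ioo 0 Real.pi := by
    intro x hx
    simp only [Set.mem_iUnion, Finset.mem_range] at hx
    obtain ⟨j, hj, hxj⟩ := hx
    exact hsub j hj hxj
  have hae : (Set.Ioo (0:ℝ) Real.pi : Set ℝ)
      =ᵐ[volume] ⋃ j ∈ Finset.range m, Set.Ioo (d j) (d (j+1)) := by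
    rw [ae_eq_set]
    refine ⟨?_, by rw [Set.diff_eq_empty.2 hUsub]; exact measure_empty⟩
    refine measure_mono_null (fun x hx => ?_)
      (((Set.finite_Icc 1 (m-1)).image d).measure_zero volume)
    obtain ⟨hx, hnx⟩ := hx
    simp only [Set.mem_iUnion, Finset.mem_range, not_exists] at hnx
    have hP0 : d 0 < x := by rw [hd0]; exact hx.1
    have hPj : d (Nat.findGreatest (fun i => d i < x) m) < x :=
      Nat.findGreatest_spec (P := fun i => d i < x) (Nat.zero_le m) hP0
    set j := Nat.findGreatest (fun i => d i < x) m with hjdef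
    have hjm : j ≤ m := Nat.findGreatest_le m
    have hjlt : j < m := by
      rcases eq_or_lt_of_le hjm with h | h
      · exfalso
        rw [h] at hPj
        rw [hdm] at hPj
        exact absurd hx.2 (not_lt.2 hPj.le)
      · exact h
    have hnj1 : ¬ d (j+1) < x :=
      Nat.findGreatest_is_greatest (Nat.lt_succ_self j) hjlt
    have hxj1 : x = d (j+1) := by
      rcases eq_or_lt_of_le (not_lt.1 hnj1) with h | h
      · exact h
      · exact absurd ⟨hPj, h⟩ (hnx j hjlt)
    have hj1m : j + 1 ≠ m := by
      intro h
      rw [hxj1, h, hdm] at hx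
      exact absurd hx.2 (lt_irrefl _)
    refine ⟨j+1, ?_, hxj1.symm⟩
    simp only [Set.mem_Icc]
    omega
  have hdisj : Set.Pairwise ↑(Finset.range m)
      (Function.onFun Disjoint (fun j => Set.Ioo (d j) (d (j+1)))) := by
    have key : ∀ i j : ℕ, i < j → j < m →
        Disjoint (Set.Ioo (d i) (d (i+1))) (Set.Ioo (d j) (d (j+1))) := by
      intro i j hij hjm
      refine Set.disjoint_left.2 fun x hxi hxj => ?_
      have : d (i+1) ≤ d j := hdle (i+1) j hij hjm.le
      exact absurd (hxi.2.trans_le this) (not_lt.2 hxj.1.le)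
    intro i hi j hj hij
    simp only [Finset.coe_range, Set.mem_Iio] at hi hj
    rcases lt_or_gt_of_ne hij with h | h
    · exact key i j h hj
    · exact (key j i h hi).symm
  -- split the two main integrals
  have hsplitL : (∫ x in Set.Ioo (0:ℝ) Real.pi,
        (-f'' x + (q x : ℂ) * f x) * conj (g x) * (wfun m d a b x : ℂ))
      = ∑ j ∈ Finset.range m, ∫ x in Set.Ioo (d j) (d (j+1)),
        (-f'' x + (q x : ℂ) * f x) * conj (g x) * (wfun m d a b x : ℂ) := by
    rw [setIntegral_congr_set hae]
    exact integral_biUnion_finset _ (fun j _ => measurableSet_Ioo) hdisj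
      (fun j hj => hLi j (Finset.mem_range.1 hj))
  have hsplitR : (∫ x in Set.Ioo (0:ℝ) Real.pi,
        f x * conj (-g'' x + (q x : ℂ) * g x) * (wfun m d a b x : ℂ))
      = ∑ j ∈ Finset.range m, ∫ x in Set.Ioo (d j) (d (j+1)),
        f x * conj (-g'' x + (q x : ℂ) * g x) * (wfun m d a b x : ℂ) := by
    rw [setIntegral_congr_set hae]
    exact integral_biUnion_finset _ (fun j _ => measurableSet_Ioo) hdisj
      (fun j hj => hRi j (Finset.mem_range.1 hj))
  -- telescoping function
  set T : ℕ → ℂ := fun j =>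
    ((∏ i ∈ Finset.Icc 1 (min j (m-1)), (a i * b i)⁻¹ : ℝ) : ℂ) * WV j with hT
  -- per-interval difference
  have hDj : ∀ j, j < m →
      (∫ x in Set.Ioo (d j) (d (j+1)),
        (-f'' x + (q x : ℂ) * f x) * conj (g x) * (wfun m d a b x : ℂ))
      - (∫ x in Set.Ioo (d j) (d (j+1)),
        f x * conj (-g'' x + (q x : ℂ) * g x) * (wfun m d a b x : ℂ))
      = T (j+1) - T j := by
    intro j hj
    -- integrability of the unweighted products
    obtain ⟨Cg, hCg⟩ := hBg j hj
    obtain ⟨Cf, hCf⟩ := hBf j hj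
    have hgc : ContinuousOn g (Set.Ioo (d j) (d (j+1))) :=
      fun x hx => (hgd j hj x hx).continuousAt.continuousWithinAt
    have hfc : ContinuousOn f (Set.Ioo (d j) (d (j+1))) :=
      fun x hx => (hfd j hj x hx).continuousAt.continuousWithinAt
    have hA : IntegrableOn (fun x => (-f'' x + (q x : ℂ) * f x) * conj (g x))
        (Set.Ioo (d j) (d (j+1))) := by
      have h0 : Integrable (fun x => conj (g x) * (-f'' x + (q x : ℂ) * f x))
          (volume.restrict (Set.Ioo (d j) (d (j+1)))) := by
        refine Integrable.bdd_mul (c := Cg) (hPf.mono_set (hsub j hj)) ?_ ?_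
        · exact (continuous_star.comp_continuousOn hgc).aestronglyMeasurable measurableSet_Ioo
        · rw [ae_restrict_iff' measurableSet_Ioo]
          exact ae_of_all _ fun x hx => by simpa using hCg x hx
      have h0' : IntegrableOn (fun x => conj (g x) * (-f'' x + (q x : ℂ) * f x))
          (Set.Ioo (d j) (d (j+1))) := h0
      exact h0'.congr_fun (fun x _ => by ring) measurableSet_Ioo
    have hB : IntegrableOn (fun x => f x * conj (-g'' x + (q x : ℂ) * g x))
        (Set.Ioo (d j) (d (j+1))) := by
      have h0 : Integrable (fun x => f x * conj (-g'' x + (q x : ℂ) * g x))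
          (volume.restrict (Set.Ioo (d j) (d (j+1)))) := by
        refine Integrable.bdd_mul (c := Cf) (integrable_conj' (hPg.mono_set (hsub j hj)))
          (hfc.aestronglyMeasurable measurableSet_Ioo) ?_
        rw [ae_restrict_iff' measurableSet_Ioo]
        exact ae_of_all _ hCf
      exact h0
    -- pull out the constant weight
    have eL : (∫ x in Set.Ioo (d j) (d (j+1)),
        (-f'' x + (q x : ℂ) * f x) * conj (g x) * (wfun m d a b x : ℂ))
        = (∫ x in Set.Ioo (d j) (d (j+1)), (-f'' x + (q x : ℂ) * f x) * conj (g x))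
          * ((u j : ℝ) : ℂ) := by
      rw [← MeasureTheory.integral_mul_const]
      refine setIntegral_congr_fun measurableSet_Ioo (fun x hx => ?_)
      rw [hwc j hj x hx]
    have eR : (∫ x in Set.Ioo (d j) (d (j+1)),
        f x * conj (-g'' x + (q x : ℂ) * g x) * (wfun m d a b x : ℂ))
        = (∫ x in Set.Ioo (d j) (d (j+1)), f x * conj (-g'' x + (q x : ℂ) * g x))
          * ((u j : ℝ) : ℂ) := by
      rw [← MeasureTheory.integral_mul_const]
      refine setIntegral_congr_fun measurableSet_Ioo (fun x hx => ?_)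
      rw [hwc j hj x hx]
    have eH : (∫ x in Set.Ioo (d j) (d (j+1)), (-f'' x + (q x : ℂ) * f x) * conj (g x))
        - (∫ x in Set.Ioo (d j) (d (j+1)), f x * conj (-g'' x + (q x : ℂ) * g x))
        = WL (j+1) - WV j := by
      rw [← MeasureTheory.integral_sub hA hB, ← hIj j hj]
      refine setIntegral_congr_fun measurableSet_Ioo (fun x hx => ?_)
      simp only [map_add, map_neg, map_mul, Complex.conj_ofReal]
      ring
    -- the telescoping step
    have hminj : min j (m-1) = j := by omega
    have hTj : T j = ((u j : ℝ) : ℂ) * WV j := by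
      simp only [hT, hu, hminj]
    have hTj1 : T (j+1) = ((u j : ℝ) : ℂ) * WL (j+1) := by
      by_cases hcase : j + 1 = m
      · have h1 : (1:ℕ) ≤ j + 1 := by omega
        obtain ⟨-, -, hfv, hfv'⟩ := hFL (j+1) h1 hj
        obtain ⟨-, -, hgv, hgv'⟩ := hGl (j+1) h1 hj
        have ha1 : a' (j+1) = 1 := by rw [ha']; simp [hcase]
        have hb1 : b' (j+1) = 1 := by rw [hb']; simp [hcase]
        have hc1 : c' (j+1) = 0 := by rw [hc']; simp [hcase]
        rw [ha1] at hfv hgv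
        rw [hb1, hc1] at hfv' hgv'
        have hWLm : WL (j+1) = WV (j+1) := by
          simp only [hWL, hWV]
          rw [hfv, hgv, hfv', hgv']
          push_cast
          ring
        rw [hWLm]
        have hminm : min (j+1) (m-1) = j := by omega
        simp only [hT, hu, hminm]
      · have hj1m : j + 1 < m := lt_of_le_of_ne hj hcase
        have h1 : (1:ℕ) ≤ j + 1 := by omega
        obtain ⟨-, -, hfv, hfv'⟩ := hFL (j+1) h1 hj
        obtain ⟨-, -, hgv, hgv'⟩ := hGl (j+1) h1 hj
        have ha1 : a' (j+1) = a (j+1) := by rw [ha']; simp [hcase]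
        have hb1 : b' (j+1) = b (j+1) := by rw [hb']; simp [hcase]
        have hc1 : c' (j+1) = c (j+1) := by rw [hc']; simp [hcase]
        rw [ha1] at hfv hgv
        rw [hb1, hc1] at hfv' hgv'
        have hab0 : (a (j+1) * b (j+1)) ≠ 0 := ne_of_gt (hab (j+1) h1 hj1m)
        have hWV1 : WV (j+1) = ((a (j+1) * b (j+1) : ℝ) : ℂ) * WL (j+1) := by
          simp only [hWV, hWL]
          rw [hfv, hgv, hfv', hgv']
          simp only [map_add, map_mul, Complex.conj_ofReal]
          push_cast
          ring
        have hu1 : u (j+1) = u j * (a (j+1) * b (j+1))⁻¹ := by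
          rw [hu]
          exact Finset.prod_Icc_succ_top (by omega) _
        have hmin : min (j+1) (m-1) = j + 1 := by omega
        simp only [hT, hmin]
        have e3 : (∏ i ∈ Finset.Icc 1 (j+1), (a i * b i)⁻¹ : ℝ) = u (j+1) := by rw [hu]
        rw [e3, hWV1, hu1]
        have ha0 : ((a (j+1) : ℝ) : ℂ) ≠ 0 :=
          Complex.ofReal_ne_zero.2 (left_ne_zero_of_mul hab0)
        have hb0 : ((b (j+1) : ℝ) : ℂ) ≠ 0 :=
          Complex.ofReal_ne_zero.2 (right_ne_zero_of_mul hab0)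
        push_cast
        field_simp [ha0, hb0]
    rw [eL, eR, hTj, hTj1, ← sub_mul, eH]
    ring
  -- summing up
  have hsum : (∫ x in Set.Ioo (0:ℝ) Real.pi,
        (-f'' x + (q x : ℂ) * f x) * conj (g x) * (wfun m d a b x : ℂ))
      - (∫ x in Set.Ioo (0:ℝ) Real.pi,
        f x * conj (-g'' x + (q x : ℂ) * g x) * (wfun m d a b x : ℂ))
      = T m - T 0 := by
    rw [hsplitL, hsplitR, ← Finset.sum_sub_distrib]
    rw [Finset.sum_congr rfl (fun j hj => hDj j (Finset.mem_range.1 hj))]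
    exact Finset.sum_range_sub T m
  -- boundary identities
  have hr1' : ((h3 - h1 * h2 : ℝ) : ℂ) ≠ 0 := by
    rw [Complex.ofReal_ne_zero]
    exact ne_of_gt hr1
  have hr2' : ((H1 * H2 - H3 : ℝ) : ℂ) ≠ 0 := by
    rw [Complex.ofReal_ne_zero]
    exact ne_of_gt hr2
  have hzero : ((wfun m d a b 0 / (h3 - h1 * h2) : ℝ) : ℂ) *
        ((h2 : ℂ) * f' 0 + (h3 : ℂ) * f 0) * conj (g' 0 + (h1 : ℂ) * g 0)
      - ((wfun m d a b 0 / (h3 - h1 * h2) : ℝ) : ℂ) *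
        (f' 0 + (h1 : ℂ) * f 0) * conj ((h2 : ℂ) * g' 0 + (h3 : ℂ) * g 0)
      = T 0 := by
    have hmin : min 0 (m-1) = 0 := by omega
    rw [hw0]
    simp only [hT, hWV, hmin]
    rw [show Finset.Icc 1 0 = (∅ : Finset ℕ) from Finset.Icc_eq_empty (by omega)]
    rw [Finset.prod_empty, hd0]
    simp only [map_add, map_mul, Complex.conj_ofReal]
    have hr1c : ((h3 : ℂ) - (h1 : ℂ) * (h2 : ℂ)) ≠ 0 := by
      have := hr1'
      push_cast at this
      exact this
    push_cast
    field_simp [hr1c]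
    ring
  have hpi : ((wfun m d a b Real.pi / (H1 * H2 - H3) : ℝ) : ℂ) *
        ((H2 : ℂ) * f' Real.pi + (H3 : ℂ) * f Real.pi) *
          conj (g' Real.pi + (H1 : ℂ) * g Real.pi)
      - ((wfun m d a b Real.pi / (H1 * H2 - H3) : ℝ) : ℂ) *
        (f' Real.pi + (H1 : ℂ) * f Real.pi) *
          conj ((H2 : ℂ) * g' Real.pi + (H3 : ℂ) * g Real.pi)
      = -(T m) := by
    have hmin : min m (m-1) = m - 1 := by omega
    rw [hwπ]
    simp only [hT, hWV, hmin]
    rw [show (∏ i ∈ Finset.Icc 1 (m-1), (a i * b i)⁻¹ : ℝ) = u (m-1) from by rw [hu]]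
    rw [hdm]
    simp only [map_add, map_mul, Complex.conj_ofReal]
    have hr2c : ((H1 : ℂ) * (H2 : ℂ) - (H3 : ℂ)) ≠ 0 := by
      have := hr2'
      push_cast at this
      exact this
    push_cast
    field_simp [hr2c]
    ring
  linear_combination hsum + hzero + hpi
end
end
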